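/- arXiv:0908.1253 — 8 statements merged into one kernel-verified Lean document; each statement's English description precedes it below -/
import Mathlib

section
/- Let Ψ(α,β) = (1 − cos α)(1 − cos β) + (β − sin β)·sin α. If π/2 ≤ α ≤ 3π/2 and −α ≤ β ≤ 2π − α, then Ψ(α,β) ≥ 0. -/
open Real

lemma cos_le_cos_aux (c y : ℝ) (hc0 : 0 ≤ c) (hcy : c ≤ y) (hy : y ≤ 2 * π - c) :
    Real.cos y ≤ Real.cos c := by
  rcases le_total y π with h | h
  · exact Real.cos_le_cos_of_nonneg_of_le_pi hc0 h hcy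
  · have h2 : Real.cos y = Real.cos (2 * π - y) := by
      rw [Real.cos_two_pi_sub]
    rw [h2]
    exact Real.cos_le_cos_of_nonneg_of_le_pi hc0 (by linarith) (by linarith)

lemma cos_ge_cos_aux (c y : ℝ) (hc : c ≤ π) (hy1 : -c ≤ y) (hy2 : y ≤ c) :
    Real.cos c ≤ Real.cos y := by
  have : Real.cos y = Real.cos |y| := (Real.cos_abs y).symm
  rw [this]
  exact Real.cos_le_cos_of_nonneg_of_le_pi (abs_nonneg y) hc (abs_le.mpr ⟨hy1, hy2⟩)

lemma key (c x : ℝ) (hc1 : 0 ≤ c) (hc2 : c ≤ π) (hx1 : -c ≤ x) (hx2 : x ≤ 2 * π - c) :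
    Real.sin x ≤ Real.sin c + (x - c) * Real.cos c := by
  set F : ℝ → ℝ := fun y => Real.sin c + (y - c) * Real.cos c - Real.sin y with hF
  have hderiv : ∀ y : ℝ, HasDerivAt F (Real.cos c - Real.cos y) y := by
    intro y
    have h1 : HasDerivAt (fun y : ℝ => Real.sin c + (y - c) * Real.cos c)
        (Real.cos c) y := by
      simpa using (((hasDerivAt_id y).sub_const c).mul_const (Real.cos c)).const_add
        (Real.sin c)
    exact h1.sub (Real.hasDerivAt_sin y)
  have hFc : F c = 0 := by simp [hF]
  have hFx : 0 ≤ F x := by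
    rcases le_total x c with h | h
    · -- F antitone on [-c, c]
      have hanti : AntitoneOn F (Set.Icc (-c) c) := by
        apply antitoneOn_of_deriv_nonpos (convex_Icc _ _)
        · exact (Continuous.continuousOn (by continuity))
        · intro y hy
          exact (hderiv y).differentiableAt.differentiableWithinAt
        · intro y hy
          rw [interior_Icc] at hy
          rw [(hderiv y).deriv]
          have := cos_ge_cos_aux c y hc2 (le_of_lt hy.1) (le_of_lt hy.2)
          linarith
      have := hanti ⟨hx1, h⟩ ⟨neg_le_self hc1, le_refl c⟩ h
      linarith [hFc ▸ this]
    · -- F monotone on [c, 2π - c]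
      have hmono : MonotoneOn F (Set.Icc c (2 * π - c)) := by
        apply monotoneOn_of_deriv_nonneg (convex_Icc _ _)
        · exact (Continuous.continuousOn (by continuity))
        · intro y hy
          exact (hderiv y).differentiableAt.differentiableWithinAt
        · intro y hy
          rw [interior_Icc] at hy
          rw [(hderiv y).deriv]
          have := cos_le_cos_aux c y hc1 (le_of_lt hy.1) (le_of_lt hy.2)
          linarith
      have hcmem : c ∈ Set.Icc c (2 * π - c) := ⟨le_refl c, by linarith⟩
      have := hmono hcmem ⟨h, hx2⟩ h
      linarith [hFc ▸ this]
  simp only [hF] at hFx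
  linarith

theorem stmt1 (α β : ℝ) (h1 : π / 2 ≤ α) (h2 : α ≤ 3 * π / 2)
    (h3 : -α ≤ β) (h4 : β ≤ 2 * π - α) :
    (1 - Real.cos α) * (1 - Real.cos β) + (β - Real.sin β) * Real.sin α ≥ 0 := by
  have hpi := Real.pi_pos
  set c := α / 2 with hc
  have hα : α = 2 * c := by rw [hc]; ring
  have hid : (1 - Real.cos α) * (1 - Real.cos β) + (β - Real.sin β) * Real.sin α
      = 2 * Real.sin c * (Real.sin c + ((β + c) - c) * Real.cos c - Real.sin (β + c)) := by
    rw [hα, Real.cos_two_mul', Real.sin_two_mul, Real.sin_add]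
    linear_combination (Real.cos β - 1) * Real.sin_sq_add_cos_sq c
  rw [hid]
  have hc1 : 0 ≤ c := by rw [hc]; linarith
  have hc2 : c ≤ π := by rw [hc]; linarith
  have hsin : 0 ≤ Real.sin c := Real.sin_nonneg_of_nonneg_of_le_pi hc1 hc2
  have hkey := key c (β + c) hc1 hc2 (by rw [hc]; linarith) (by rw [hc]; linarith)
  have : 0 ≤ Real.sin c + ((β + c) - c) * Real.cos c - Real.sin (β + c) := by linarith
  positivity
end

section
/- For −π ≤ β ≤ −π/2, one has 2 − 2·cos β − β·sin β > 0. -/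
open Real

theorem stmt3 (β : ℝ) (h1 : -π ≤ β) (h2 : β ≤ -(π / 2)) :
    2 - 2 * Real.cos β - β * Real.sin β > 0 := by
  have hπ : (3.14 : ℝ) < π := by linarith [Real.pi_gt_d6]
  have ht0 : 0 ≤ π + β := by linarith
  have ht1 : π + β ≤ π / 2 := by linarith
  have hc := Real.one_sub_mul_le_cos ht0 ht1
  rw [show π + β = π - (-β) by ring, Real.cos_pi_sub, Real.cos_neg] at hc
  -- hc : 1 - 2/π * (π + β) ≤ -cos β
  have hs : -1 ≤ Real.sin β := Real.neg_one_le_sin β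
  have hβneg : β < 0 := by linarith
  have hbs : β * Real.sin β ≤ -β := by nlinarith
  have hπpos : (0:ℝ) < π := Real.pi_pos
  have hc' : Real.cos β ≤ 1 + 2 / π * β := by
    have h2' : 2 / π * (π - -β) = 2 + 2 / π * β := by field_simp; ring
    linarith [hc, h2']
  have key : (0:ℝ) < -β * (4/π - 1) :=
    mul_pos (neg_pos.2 hβneg) (by rw [sub_pos, lt_div_iff₀ hπpos]; linarith [Real.pi_lt_d2])
  have e : -β * (4/π - 1) = -2 * (2 / π * β) + β := by field_simp; ring
  linarith [key, e ▸ key]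
end

section
/- Let ξ : [0, 2π] → ℝ be C¹, increasing, with ξ(2π) = ξ(0) + 2π. Then the double integral over [0,2π]² of (1 − cos(ξ(θ) − ξ(φ)))/(1 − cos(θ − φ)) · (ξ'(θ) − 1) dθ dφ is nonnegative. Equality holds if and only if ξ(θ) = θ + c for some constant c. -/
open Real

noncomputable section Aux5

def FF (x : ℝ) : ℝ := 1 - Real.cos x
def GG (x : ℝ) : ℝ := x - Real.sin x
def hh (a b : ℝ) : ℝ := (GG a - GG b) * Real.sin b - (FF a - FF b) * FF b
def PH (b a : ℝ) : ℝ := GG a * Real.sin b + Real.cos a * FF b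

lemma hh_eq_PH (a b : ℝ) : hh a b = PH b a - PH b b := by
  simp only [hh, PH, FF, GG]; ring

lemma FF_nonneg (x : ℝ) : 0 ≤ FF x := by
  simp only [FF]; nlinarith [Real.cos_le_one x]

lemma FF_eq_sin_sq (x : ℝ) : FF x = 2 * Real.sin (x/2) ^ 2 := by
  have h := Real.sin_sq_eq_half_sub (x/2)
  have : 2 * (x/2) = x := by ring
  rw [this] at h
  simp only [FF]
  linarith

lemma FF_le (x : ℝ) : FF x ≤ x ^ 2 / 2 := by
  have := Real.one_sub_sq_div_two_le_cos (x := x)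
  simp only [FF]; linarith

lemma FF_lower' {x : ℝ} (h0 : 0 ≤ x) (h2 : x ≤ π) : 2 * x ^ 2 / π ^ 2 ≤ FF x := by
  have hπ := Real.pi_pos
  have hs : x / π ≤ Real.sin (x/2) := by
    have h := Real.mul_le_sin (x := x/2) (by linarith) (by linarith)
    calc x / π = 2 / π * (x/2) := by ring
      _ ≤ _ := h
  have h0' : 0 ≤ x / π := by positivity
  rw [FF_eq_sin_sq]
  have hsq := pow_le_pow_left₀ h0' hs 2
  calc 2 * x ^ 2 / π ^ 2 = 2 * (x/π) ^ 2 := by ring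
    _ ≤ 2 * Real.sin (x/2) ^ 2 := by linarith

lemma FF_abs (x : ℝ) : FF |x| = FF x := by simp [FF, Real.cos_abs]

lemma FF_lower {x : ℝ} (hx : |x| ≤ π) : 2 * x ^ 2 / π ^ 2 ≤ FF x := by
  have := FF_lower' (abs_nonneg x) hx
  rw [FF_abs, sq_abs] at this
  exact this

lemma FF_pos {x : ℝ} (h0 : x ≠ 0) (hx : |x| < 2 * π) : 0 < FF x := by
  rw [FF_eq_sin_sq]
  have : Real.sin (x/2) ≠ 0 := by
    intro h
    rcases Real.sin_eq_zero_iff.1 h with ⟨n, hn⟩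
    have hπ := Real.pi_pos
    rcases abs_lt.1 hx with ⟨h1, h2⟩
    have hx2 : -π < x/2 := by linarith
    have hx2' : x/2 < π := by linarith
    rw [← hn] at hx2 hx2'
    have : (n : ℝ) = 0 := by
      rcases lt_trichotomy (n:ℝ) 0 with h | h | h
      · have : (n:ℝ) ≤ -1 := by exact_mod_cast Int.le_of_lt_add_one (by exact_mod_cast h)
        nlinarith
      · exact h
      · have : (1:ℝ) ≤ n := by exact_mod_cast h
        nlinarith
    rw [this] at hn
    simp only [Int.cast_zero, zero_mul] at hn
    exact h0 (by linarith)
  positivity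

lemma GG_nonneg {x : ℝ} (hx : 0 ≤ x) : 0 ≤ GG x := by
  simp only [GG]; linarith [Real.sin_le hx]

lemma GG_le {x : ℝ} (hx : 0 ≤ x) : GG x ≤ x ^ 3 / 6 := by
  have key : ∀ y : ℝ, 0 ≤ y → 0 ≤ y ^ 3 / 6 - GG y := by
    intro y hy
    have hmono : MonotoneOn (fun z : ℝ => z ^ 3 / 6 - GG z) (Set.Ici 0) := by
      apply monotoneOn_of_deriv_nonneg (convex_Ici 0)
      · apply Continuous.continuousOn; simp only [GG]; continuity
      · intro z hz
        apply DifferentiableAt.differentiableWithinAt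
        simp only [GG]; fun_prop
      · intro z hz
        have : HasDerivAt (fun z : ℝ => z ^ 3 / 6 - GG z) (z ^ 2 / 2 - (1 - Real.cos z)) z := by
          simp only [GG]
          have h1 : HasDerivAt (fun z : ℝ => z ^ 3 / 6) (3 * z ^ 2 / 6) z := by
            simpa using ((hasDerivAt_pow 3 z).div_const 6)
          have h2 : HasDerivAt (fun z : ℝ => z - Real.sin z) (1 - Real.cos z) z :=
            (hasDerivAt_id z).sub (Real.hasDerivAt_sin z)
          exact (h1.sub h2).congr_deriv (by ring)
        rw [this.deriv]
        have := Real.one_sub_sq_div_two_le_cos (x := z)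
        linarith
    have := hmono (Set.self_mem_Ici) (Set.mem_Ici.2 hy) hy
    simpa [GG] using this
  linarith [key x hx]

lemma abs_GG_le (x : ℝ) : |GG x| ≤ |x| ^ 3 / 6 := by
  rcases le_or_gt 0 x with h | h
  · rw [abs_of_nonneg (GG_nonneg h), abs_of_nonneg h]; exact GG_le h
  · have h1 : 0 ≤ -x := by linarith
    have hneg : GG (-x) = - GG x := by simp only [GG, Real.sin_neg]; ring
    have h2 : GG x ≤ 0 := by rw [← neg_nonneg, ← hneg]; exact GG_nonneg h1
    rw [abs_of_nonpos h2, abs_of_neg h]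
    have h3 := GG_le h1
    rw [hneg] at h3
    linarith [h3]


lemma hasDerivAt_GG (x : ℝ) : HasDerivAt GG (FF x) x := by
  exact (hasDerivAt_id' x).sub (Real.hasDerivAt_sin x)

lemma hasDerivAt_FF (x : ℝ) : HasDerivAt FF (Real.sin x) x := by
  show HasDerivAt (fun x => 1 - Real.cos x) (Real.sin x) x
  simpa using ((Real.hasDerivAt_cos x).const_sub 1)

lemma PH_deriv_eq (a b : ℝ) :
    FF a * Real.sin b - Real.sin a * FF b
      = 4 * Real.sin (a/2) * Real.sin (b/2) * Real.sin ((a-b)/2) := by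
  have hca : Real.cos a = 1 - 2 * Real.sin (a/2) ^ 2 := by
    have := Real.sin_sq_eq_half_sub (a/2)
    have h2 : 2 * (a/2) = a := by ring
    rw [h2] at this; linarith
  have hcb : Real.cos b = 1 - 2 * Real.sin (b/2) ^ 2 := by
    have := Real.sin_sq_eq_half_sub (b/2)
    have h2 : 2 * (b/2) = b := by ring
    rw [h2] at this; linarith
  have hsa : Real.sin a = 2 * Real.sin (a/2) * Real.cos (a/2) := by
    have := Real.sin_two_mul (a/2)
    have h2 : 2 * (a/2) = a := by ring
    rw [h2] at this; linarith
  have hsb : Real.sin b = 2 * Real.sin (b/2) * Real.cos (b/2) := by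
    have := Real.sin_two_mul (b/2)
    have h2 : 2 * (b/2) = b := by ring
    rw [h2] at this; linarith
  have hab : Real.sin ((a-b)/2) = Real.sin (a/2) * Real.cos (b/2) - Real.cos (a/2) * Real.sin (b/2) := by
    have : (a-b)/2 = a/2 - b/2 := by ring
    rw [this, Real.sin_sub]
  simp only [FF]
  rw [hca, hcb, hsa, hsb, hab]
  ring

lemma hasDerivAt_PH (b a : ℝ) :
    HasDerivAt (PH b) (4 * Real.sin (a/2) * Real.sin (b/2) * Real.sin ((a-b)/2)) a := by
  have h : HasDerivAt (PH b) (FF a * Real.sin b - Real.sin a * FF b) a := by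
    have h1 : HasDerivAt (fun a => GG a * Real.sin b) (FF a * Real.sin b) a :=
      (hasDerivAt_GG a).mul_const _
    have h2 : HasDerivAt (fun a => Real.cos a * FF b) (-Real.sin a * FF b) a :=
      (Real.hasDerivAt_cos a).mul_const _
    have h3 := h1.add h2
    have : PH b = fun a => GG a * Real.sin b + Real.cos a * FF b := rfl
    rw [this]
    exact h3.congr_deriv (by ring)
  rwa [PH_deriv_eq a b] at h

lemma PH_cont (b : ℝ) : Continuous (PH b) := by
  have : PH b = fun a => (a - Real.sin a) * Real.sin b + Real.cos a * FF b := rfl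
  rw [this]; continuity

lemma sin_half_pos {x : ℝ} (h0 : 0 < x) (h2 : x < 2 * π) : 0 < Real.sin (x/2) :=
  Real.sin_pos_of_pos_of_lt_pi (by linarith) (by linarith)

lemma sin_half_nonneg {x : ℝ} (h0 : 0 ≤ x) (h2 : x ≤ 2 * π) : 0 ≤ Real.sin (x/2) :=
  Real.sin_nonneg_of_nonneg_of_le_pi (by linarith) (by linarith)

lemma PH_monoOn {b : ℝ} (hb0 : 0 ≤ b) (hb2 : b ≤ 2 * π) :
    MonotoneOn (PH b) (Set.Icc b (2*π)) := by
  apply monotoneOn_of_deriv_nonneg (convex_Icc _ _) (PH_cont b).continuousOn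
  · intro x hx
    exact ((hasDerivAt_PH b x).differentiableAt).differentiableWithinAt
  · intro x hx
    rw [interior_Icc] at hx
    rw [(hasDerivAt_PH b x).deriv]
    have h1 : 0 ≤ Real.sin (x/2) := sin_half_nonneg (le_trans hb0 hx.1.le) hx.2.le
    have h2 : 0 ≤ Real.sin (b/2) := sin_half_nonneg hb0 hb2
    have h3 : 0 ≤ Real.sin ((x-b)/2) :=
      sin_half_nonneg (by linarith [hx.1]) (by linarith [hx.2])
    positivity

lemma PH_antiOn {b : ℝ} (hb0 : 0 ≤ b) (hb2 : b ≤ 2 * π) :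
    AntitoneOn (PH b) (Set.Icc 0 b) := by
  apply antitoneOn_of_deriv_nonpos (convex_Icc _ _) (PH_cont b).continuousOn
  · intro x hx
    exact ((hasDerivAt_PH b x).differentiableAt).differentiableWithinAt
  · intro x hx
    rw [interior_Icc] at hx
    rw [(hasDerivAt_PH b x).deriv]
    have h1 : 0 ≤ Real.sin (x/2) := sin_half_nonneg hx.1.le (by linarith [hx.2])
    have h2 : 0 ≤ Real.sin (b/2) := sin_half_nonneg hb0 hb2
    have h3 : Real.sin ((x-b)/2) ≤ 0 := by
      have hrw : Real.sin ((x-b)/2) = - Real.sin ((b-x)/2) := by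
        rw [← Real.sin_neg]; ring_nf
      rw [hrw, neg_nonpos]
      exact sin_half_nonneg (by linarith [hx.2]) (by linarith [hx.1, hb2])
    have := mul_nonneg h1 h2
    nlinarith

lemma hh_nonneg {a b : ℝ} (ha0 : 0 ≤ a) (ha2 : a ≤ 2*π) (hb0 : 0 ≤ b) (hb2 : b ≤ 2*π) :
    0 ≤ hh a b := by
  rw [hh_eq_PH, sub_nonneg]
  rcases le_or_gt b a with h | h
  · exact PH_monoOn hb0 hb2 (Set.mem_Icc.2 ⟨le_refl b, hb2⟩) (Set.mem_Icc.2 ⟨h, ha2⟩) h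
  · exact PH_antiOn hb0 hb2 (Set.mem_Icc.2 ⟨ha0, h.le⟩) (Set.mem_Icc.2 ⟨hb0, le_refl b⟩) h.le

lemma PH_strictMonoOn {b : ℝ} (hb0 : 0 < b) (hb2 : b < 2 * π) :
    StrictMonoOn (PH b) (Set.Icc b (2*π)) := by
  apply strictMonoOn_of_deriv_pos (convex_Icc _ _) (PH_cont b).continuousOn
  intro x hx
  rw [interior_Icc] at hx
  rw [(hasDerivAt_PH b x).deriv]
  have h1 : 0 < Real.sin (x/2) := sin_half_pos (lt_trans hb0 hx.1) hx.2
  have h2 : 0 < Real.sin (b/2) := sin_half_pos hb0 hb2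
  have h3 : 0 < Real.sin ((x-b)/2) := sin_half_pos (by linarith [hx.1]) (by linarith [hx.2])
  positivity

lemma PH_strictAntiOn {b : ℝ} (hb0 : 0 < b) (hb2 : b < 2 * π) :
    StrictAntiOn (PH b) (Set.Icc 0 b) := by
  apply strictAntiOn_of_deriv_neg (convex_Icc _ _) (PH_cont b).continuousOn
  intro x hx
  rw [interior_Icc] at hx
  rw [(hasDerivAt_PH b x).deriv]
  have h1 : 0 < Real.sin (x/2) := sin_half_pos hx.1 (by linarith [hx.2])
  have h2 : 0 < Real.sin (b/2) := sin_half_pos hb0 hb2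
  have h3 : Real.sin ((x-b)/2) < 0 := by
    have hrw : Real.sin ((x-b)/2) = - Real.sin ((b-x)/2) := by
      rw [← Real.sin_neg]; ring_nf
    rw [hrw, neg_neg_iff_pos.symm] at *
    rw [hrw]
    have := sin_half_pos (x := b - x) (by linarith [hx.2]) (by linarith [hx.1, hb2])
    linarith
  have := mul_pos h1 h2
  nlinarith

lemma hh_eq_zero {a b : ℝ} (ha0 : 0 ≤ a) (ha2 : a ≤ 2*π) (hb0 : 0 < b) (hb2 : b < 2*π)
    (h : hh a b = 0) : a = b := by
  by_contra hne
  rcases lt_or_gt_of_ne hne with hlt | hgt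
  · have := PH_strictAntiOn hb0 hb2 (Set.mem_Icc.2 ⟨ha0, hlt.le⟩)
      (Set.mem_Icc.2 ⟨hb0.le, le_refl b⟩) hlt
    rw [hh_eq_PH] at h
    linarith
  · have := PH_strictMonoOn hb0 hb2 (Set.mem_Icc.2 ⟨le_refl b, hb2.le⟩)
      (Set.mem_Icc.2 ⟨hgt.le, ha2⟩) hgt
    rw [hh_eq_PH] at h
    linarith

lemma hh_neg_neg (a b : ℝ) : hh (-a) (-b) = hh a b := by
  simp only [hh, GG, FF, Real.sin_neg, Real.cos_neg]; ring

lemma hh_reflect (s t : ℝ) : hh (2*π - s) (2*π - t) = hh s t := by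
  have e1 : ∀ x : ℝ, Real.sin (2*π - x) = - Real.sin x := by
    intro x; rw [Real.sin_sub]; simp [Real.sin_two_pi, Real.cos_two_pi]
  have e2 : ∀ x : ℝ, Real.cos (2*π - x) = Real.cos x := by
    intro x; rw [Real.cos_sub]; simp [Real.sin_two_pi, Real.cos_two_pi]
  simp only [hh, GG, FF, e1, e2]
  ring

lemma FF_reflect (t : ℝ) : FF (2*π - t) = FF t := by
  simp only [FF]
  rw [Real.cos_sub]
  simp [Real.sin_two_pi, Real.cos_two_pi]
def CC1 (L : ℝ) : ℝ := L^2 * π^2 / 4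
def CC2 (L : ℝ) : ℝ := ((L^3+1)/6 + (L^2+1)/4) * π^4 / 4

lemma CC1_nonneg (L : ℝ) : 0 ≤ CC1 L := by unfold CC1; positivity
lemma CC2_nonneg {L : ℝ} (hL : 0 ≤ L) : 0 ≤ CC2 L := by unfold CC2; positivity

lemma local_FF_bound {L s t : ℝ} (hs : |s| ≤ L * t) (ht0 : 0 ≤ t) (ht : t ≤ π) :
    FF s ≤ CC1 L * FF t := by
  have h1 : FF s ≤ s^2/2 := FF_le s
  have h2 : 2*t^2/π^2 ≤ FF t := FF_lower (by rw [abs_of_nonneg ht0]; exact ht)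
  have hπ := Real.pi_pos
  have hπ2 : (0:ℝ) < π^2 := by positivity
  have h3 : 2*t^2 ≤ FF t * π^2 := by
    rw [div_le_iff₀ hπ2] at h2; exact h2
  have h4 : s^2 ≤ (L*t)^2 := by
    have := pow_le_pow_left₀ (abs_nonneg s) hs 2
    rwa [sq_abs] at this
  unfold CC1
  nlinarith [mul_le_mul_of_nonneg_left h3 (sq_nonneg L)]

lemma local_hh_bound {L s t : ℝ} (hL : 0 ≤ L) (hs : |s| ≤ L * t) (ht0 : 0 ≤ t) (ht : t ≤ π) :
    |hh s t| ≤ CC2 L * (FF t)^2 := by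
  have hπ := Real.pi_pos
  have habs3 : |s|^3 ≤ L^3 * t^3 := by
    have := pow_le_pow_left₀ (abs_nonneg s) hs 3
    rwa [mul_pow] at this
  have habs2 : s^2 ≤ L^2 * t^2 := by
    have := pow_le_pow_left₀ (abs_nonneg s) hs 2
    rwa [sq_abs, mul_pow] at this
  have h1 : |GG s - GG t| ≤ L^3 * t^3/6 + t^3/6 := by
    refine (abs_sub _ _).trans ?_
    have a1 := abs_GG_le s
    have a2 := abs_GG_le t
    rw [abs_of_nonneg ht0] at a2
    linarith
  have h2 : |Real.sin t| ≤ t := by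
    have := Real.abs_sin_le_abs (x := t)
    rwa [abs_of_nonneg ht0] at this
  have h3 : |FF s - FF t| ≤ L^2*t^2/2 + t^2/2 := by
    refine (abs_sub _ _).trans ?_
    rw [abs_of_nonneg (FF_nonneg s), abs_of_nonneg (FF_nonneg t)]
    have := FF_le s
    have := FF_le t
    nlinarith
  have hFt : FF t ≤ t^2/2 := FF_le t
  have hmain : |hh s t| ≤ ((L^3+1)/6 + (L^2+1)/4) * t^4 := by
    unfold hh
    refine (abs_sub _ _).trans ?_
    rw [abs_mul, abs_mul]
    have e1 : |GG s - GG t| * |Real.sin t| ≤ (L^3*t^3/6 + t^3/6) * t :=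
      mul_le_mul h1 h2 (abs_nonneg _) (by positivity)
    have e2 : |FF s - FF t| * |FF t| ≤ (L^2*t^2/2 + t^2/2) * (t^2/2) := by
      rw [abs_of_nonneg (FF_nonneg t)]
      exact mul_le_mul h3 hFt (FF_nonneg t) (by positivity)
    nlinarith
  have hFlow : 2*t^2/π^2 ≤ FF t := FF_lower (by rw [abs_of_nonneg ht0]; exact ht)
  have hF2 : (2*t^2/π^2)^2 ≤ (FF t)^2 := pow_le_pow_left₀ (by positivity) hFlow 2
  have ht4 : t^4 ≤ π^4 * (FF t)^2 / 4 := by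
    have : (2*t^2/π^2)^2 = 4*t^4/π^4 := by ring
    rw [this] at hF2
    rw [div_le_iff₀ (by positivity)] at hF2
    rw [le_div_iff₀ (by norm_num : (0:ℝ) < 4)]
    nlinarith
  unfold CC2
  calc |hh s t| ≤ ((L^3+1)/6 + (L^2+1)/4) * t^4 := hmain
    _ ≤ ((L^3+1)/6 + (L^2+1)/4) * (π^4 * (FF t)^2 / 4) := by
        apply mul_le_mul_of_nonneg_left ht4 (by positivity)
    _ = ((L^3+1)/6 + (L^2+1)/4) * π^4/4 * (FF t)^2 := by ring

lemma kernel_bounds {L a b : ℝ} (hL : 0 ≤ L) (ha0 : 0 ≤ a) (ha2 : a ≤ 2*π) (hb0 : 0 ≤ b)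
    (hb2 : b ≤ 2*π) (hab : a ≤ L * b) (hab' : 2*π - a ≤ L * (2*π - b)) :
    FF a ≤ CC1 L * FF b ∧ |hh a b| ≤ CC2 L * (FF b)^2 := by
  rcases le_or_gt b π with h | h
  · have hs : |a| ≤ L * b := by rwa [abs_of_nonneg ha0]
    exact ⟨local_FF_bound hs hb0 h, local_hh_bound hL hs hb0 h⟩
  · set s := 2*π - a with hsdef
    set t := 2*π - b with htdef
    have ht0 : 0 ≤ t := by simp only [htdef]; linarith
    have htπ : t ≤ π := by simp only [htdef]; linarith
    have hst : |s| ≤ L * t := by rw [abs_of_nonneg (by simp only [hsdef]; linarith)]; exact hab'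
    have hFab : FF a = FF s := by rw [show a = 2*π - s by rw [hsdef]; ring, FF_reflect]
    have hFb : FF b = FF t := by rw [show b = 2*π - t by rw [htdef]; ring, FF_reflect]
    have hhab : hh a b = hh s t := by
      rw [show a = 2*π - s by rw [hsdef]; ring, show b = 2*π - t by rw [htdef]; ring,
        hh_reflect]
    rw [hFab, hFb, hhab]
    exact ⟨local_FF_bound hst ht0 htπ, local_hh_bound hL hst ht0 htπ⟩

lemma abs_div_le {x y C : ℝ} (hy : 0 ≤ y) (hC : 0 ≤ C) (h : |x| ≤ C * y) : |x / y| ≤ C := by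
  rcases eq_or_lt_of_le hy with h0 | h0
  · have hx : x = 0 := by
      rw [← h0, mul_zero] at h
      exact abs_eq_zero.1 (le_antisymm h (abs_nonneg x))
    simp [hx, hC]
  · rw [abs_div, abs_of_pos h0, div_le_iff₀ h0]
    exact h

/-- projection onto [0, 2π] -/
def prj (x : ℝ) : ℝ := max 0 (min x (2*π))

lemma prj_mem (x : ℝ) : prj x ∈ Set.Icc 0 (2*π) := by
  have hπ := Real.pi_pos
  constructor
  · exact le_max_left _ _
  · apply max_le (by linarith)
    exact min_le_right _ _

lemma prj_eq {x : ℝ} (hx : x ∈ Set.Icc 0 (2*π)) : prj x = x := by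
  rcases hx with ⟨h1, h2⟩
  simp [prj, min_eq_left h2, max_eq_right h1]

lemma continuous_prj : Continuous prj :=
  continuous_const.max (continuous_id.min continuous_const)

lemma prj_lipschitz (x y : ℝ) : |prj x - prj y| ≤ |x - y| := by
  simp only [prj, max_def, min_def]
  rw [abs_sub_le_iff]
  constructor <;> split_ifs <;>
    linarith [le_abs_self (x - y), neg_abs_le (x - y), abs_nonneg (x - y)]

noncomputable def xt (ξ : ℝ → ℝ) (x : ℝ) : ℝ := ξ (prj x)
noncomputable def dd (ξ : ℝ → ℝ) (x : ℝ) : ℝ := derivWithin ξ (Set.Icc 0 (2*π)) (prj x)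
noncomputable def OO (ξ : ℝ → ℝ) (θ φ : ℝ) : ℝ :=
  FF (xt ξ θ - xt ξ φ) / FF (θ - φ) * (dd ξ θ - 1)
noncomputable def HH (ξ : ℝ → ℝ) (θ φ : ℝ) : ℝ :=
  hh (xt ξ θ - xt ξ φ) (θ - φ) / (FF (θ - φ))^2
noncomputable def WW (ξ : ℝ → ℝ) (φ θ : ℝ) : ℝ :=
  (GG (xt ξ θ - xt ξ φ) - GG (θ - φ)) / FF (θ - φ)

section Main

variable {ξ : ℝ → ℝ}

lemma continuous_xt (hC1 : ContDiffOn ℝ 1 ξ (Set.Icc 0 (2 * π))) : Continuous (xt ξ) :=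
  hC1.continuousOn.comp_continuous continuous_prj prj_mem

lemma continuous_dd (hC1 : ContDiffOn ℝ 1 ξ (Set.Icc 0 (2 * π))) : Continuous (dd ξ) := by
  have h : ContinuousOn (derivWithin ξ (Set.Icc 0 (2*π))) (Set.Icc 0 (2*π)) :=
    hC1.continuousOn_derivWithin (uniqueDiffOn_Icc (by positivity)) le_rfl
  exact h.comp_continuous continuous_prj prj_mem

lemma xt_eq {x : ℝ} (hx : x ∈ Set.Icc 0 (2*π)) : xt ξ x = ξ x := by
  rw [xt, prj_eq hx]

lemma hasDerivAt_xt (hC1 : ContDiffOn ℝ 1 ξ (Set.Icc 0 (2 * π))) {θ : ℝ} (hθ : θ ∈ Set.Ioo 0 (2*π)) :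
    HasDerivAt (xt ξ) (dd ξ θ) θ ∧ dd ξ θ = deriv ξ θ := by
  have hmem : Set.Icc 0 (2*π) ∈ nhds θ := Icc_mem_nhds hθ.1 hθ.2
  have hdiff : DifferentiableAt ℝ ξ θ :=
    ((hC1.differentiableOn one_ne_zero).differentiableAt hmem)
  have heq : dd ξ θ = deriv ξ θ := by
    rw [dd, prj_eq (Set.mem_Icc_of_Ioo hθ), derivWithin_of_mem_nhds hmem]
  have hev : xt ξ =ᶠ[nhds θ] ξ := by
    filter_upwards [Icc_mem_nhds hθ.1 hθ.2] with x hx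
    exact xt_eq hx
  refine ⟨?_, heq⟩
  rw [heq]
  exact hdiff.hasDerivAt.congr_of_eventuallyEq hev

lemma exists_L (hC1 : ContDiffOn ℝ 1 ξ (Set.Icc 0 (2 * π))) : ∃ L : ℝ, 1 ≤ L ∧ (∀ x ∈ Set.Icc 0 (2*π), |dd ξ x| ≤ L) ∧
    (∀ x ∈ Set.Icc 0 (2*π), ∀ y ∈ Set.Icc 0 (2*π), |ξ x - ξ y| ≤ L * |x - y|) := by
  have hcont : ContinuousOn (derivWithin ξ (Set.Icc 0 (2*π))) (Set.Icc 0 (2*π)) :=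
    hC1.continuousOn_derivWithin (uniqueDiffOn_Icc (by positivity)) le_rfl
  obtain ⟨M, hM⟩ := (isCompact_Icc (a := (0:ℝ)) (b := 2*π)).exists_bound_of_continuousOn hcont
  refine ⟨max M 1, le_max_right _ _, ?_, ?_⟩
  · intro x hx
    rw [dd, prj_eq hx]
    calc |derivWithin ξ (Set.Icc 0 (2*π)) x| ≤ M := by simpa [Real.norm_eq_abs] using hM x hx
      _ ≤ max M 1 := le_max_left _ _
  · intro x hx y hy
    have := Convex.norm_image_sub_le_of_norm_derivWithin_le
      (hC1.differentiableOn one_ne_zero)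
      (fun z hz => ((hM z hz).trans (le_max_left M 1))) (convex_Icc _ _) hy hx
    simpa [Real.norm_eq_abs] using this

lemma continuous_FF : Continuous FF := by
  have h : FF = fun x => 1 - Real.cos x := rfl
  rw [h]; continuity

lemma continuous_GG : Continuous GG := by
  have h : GG = fun x => x - Real.sin x := rfl
  rw [h]; continuity

lemma continuous_hh : Continuous (fun p : ℝ × ℝ => hh p.1 p.2) := by
  have h : (fun p : ℝ × ℝ => hh p.1 p.2)
      = fun p => (GG p.1 - GG p.2) * Real.sin p.2 - (FF p.1 - FF p.2) * FF p.2 := rfl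
  rw [h]
  exact (((continuous_GG.comp continuous_fst).sub (continuous_GG.comp continuous_snd)).mul
      (Real.continuous_sin.comp continuous_snd)).sub
    (((continuous_FF.comp continuous_fst).sub (continuous_FF.comp continuous_snd)).mul
      (continuous_FF.comp continuous_snd))


lemma FF_neg (x : ℝ) : FF (-x) = FF x := by simp [FF]

variable {L : ℝ}

/-- master pointwise bounds -/
lemma master_bounds
    (hmono : MonotoneOn ξ (Set.Icc 0 (2 * π)))
    (hdeg : ξ (2 * π) = ξ 0 + 2 * π)
    (hL1 : 1 ≤ L)
    (hLip : ∀ x ∈ Set.Icc 0 (2*π), ∀ y ∈ Set.Icc 0 (2*π), |ξ x - ξ y| ≤ L * |x - y|)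
    {θ φ : ℝ} (hθ : θ ∈ Set.Icc 0 (2*π)) (hφ : φ ∈ Set.Icc 0 (2*π)) :
    FF (xt ξ θ - xt ξ φ) ≤ CC1 L * FF (θ - φ) ∧
    |hh (xt ξ θ - xt ξ φ) (θ - φ)| ≤ CC2 L * (FF (θ - φ))^2 ∧
    0 ≤ hh (xt ξ θ - xt ξ φ) (θ - φ) := by
  have hπ := Real.pi_pos
  have h2π : (0:ℝ) ≤ 2*π := by linarith
  have hIcc0 : (0:ℝ) ∈ Set.Icc 0 (2*π) := ⟨le_refl _, h2π⟩
  have hIcc2 : (2*π) ∈ Set.Icc 0 (2*π) := ⟨h2π, le_refl _⟩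
  rw [xt_eq hθ, xt_eq hφ]
  -- general claim for ordered pair
  have key : ∀ x ∈ Set.Icc 0 (2*π), ∀ y ∈ Set.Icc 0 (2*π), y ≤ x →
      FF (ξ x - ξ y) ≤ CC1 L * FF (x - y) ∧
      |hh (ξ x - ξ y) (x - y)| ≤ CC2 L * (FF (x - y))^2 ∧
      0 ≤ hh (ξ x - ξ y) (x - y) := by
    intro x hx y hy hyx
    set a := ξ x - ξ y with ha
    set b := x - y with hb
    have ha0 : 0 ≤ a := sub_nonneg.2 (hmono hy hx hyx)
    have ha2 : a ≤ 2*π := by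
      have h1 : ξ x ≤ ξ (2*π) := hmono hx hIcc2 hx.2
      have h2 : ξ 0 ≤ ξ y := hmono hIcc0 hy hy.1
      rw [ha]; rw [hdeg] at h1; linarith
    have hb0 : 0 ≤ b := sub_nonneg.2 hyx
    have hb2 : b ≤ 2*π := by rw [hb]; linarith [hx.2, hy.1]
    have hab : a ≤ L * b := by
      have := hLip x hx y hy
      rw [abs_of_nonneg ha0, abs_of_nonneg hb0] at this
      exact this
    have hab' : 2*π - a ≤ L * (2*π - b) := by
      have h1 : ξ (2*π) - ξ x ≤ L * (2*π - x) := by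
        have := hLip (2*π) hIcc2 x hx
        rw [abs_of_nonneg (sub_nonneg.2 (hmono hx hIcc2 hx.2)),
          abs_of_nonneg (sub_nonneg.2 hx.2)] at this
        exact this
      have h2 : ξ y - ξ 0 ≤ L * (y - 0) := by
        have := hLip y hy 0 hIcc0
        rw [abs_of_nonneg (sub_nonneg.2 (hmono hIcc0 hy hy.1)),
          abs_of_nonneg (sub_nonneg.2 hy.1)] at this
        exact this
      have : 2*π - a = (ξ (2*π) - ξ x) + (ξ y - ξ 0) := by rw [ha, hdeg]; ring
      rw [this, hb]
      nlinarith
    obtain ⟨e1, e2⟩ := kernel_bounds (by linarith : (0:ℝ) ≤ L) ha0 ha2 hb0 hb2 hab hab'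
    exact ⟨e1, e2, hh_nonneg ha0 ha2 hb0 hb2⟩
  rcases le_total φ θ with h | h
  · exact key θ hθ φ hφ h
  · obtain ⟨e1, e2, e3⟩ := key φ hφ θ hθ h
    have r1 : ξ θ - ξ φ = -(ξ φ - ξ θ) := by ring
    have r2 : θ - φ = -(φ - θ) := by ring
    rw [r1, r2, FF_neg, FF_neg, hh_neg_neg]
    exact ⟨e1, e2, e3⟩

lemma OO_abs_le
    (hLd : ∀ x ∈ Set.Icc 0 (2*π), |dd ξ x| ≤ L)
    (hFF : FF (xt ξ θ - xt ξ φ) ≤ CC1 L * FF (θ - φ))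
    (hθ : θ ∈ Set.Icc 0 (2*π)) :
    |OO ξ θ φ| ≤ CC1 L * (L + 1) := by
  have hL0 : 0 ≤ L := le_trans (abs_nonneg _) (hLd θ hθ)
  rw [OO, abs_mul]
  have h1 : |FF (xt ξ θ - xt ξ φ) / FF (θ - φ)| ≤ CC1 L := by
    apply abs_div_le (FF_nonneg _) (CC1_nonneg L)
    rw [abs_of_nonneg (FF_nonneg _)]
    exact hFF
  have h2 : |dd ξ θ - 1| ≤ L + 1 := by
    have := hLd θ hθ
    have := abs_sub_abs_le_abs_sub (dd ξ θ) 1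
    cases abs_cases (dd ξ θ - 1) <;> cases abs_cases (dd ξ θ) <;> linarith [hLd θ hθ]
  exact mul_le_mul h1 h2 (abs_nonneg _) (CC1_nonneg L)

lemma HH_abs_le {θ φ : ℝ}
    (hL0 : 0 ≤ L)
    (hhh : |hh (xt ξ θ - xt ξ φ) (θ - φ)| ≤ CC2 L * (FF (θ - φ))^2) :
    |HH ξ θ φ| ≤ CC2 L :=
  abs_div_le (sq_nonneg _) (CC2_nonneg hL0) hhh

lemma HH_nonneg {θ φ : ℝ}
    (hhh : 0 ≤ hh (xt ξ θ - xt ξ φ) (θ - φ)) : 0 ≤ HH ξ θ φ :=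
  div_nonneg hhh (sq_nonneg _)

lemma measurable_OO (hC1 : ContDiffOn ℝ 1 ξ (Set.Icc 0 (2 * π))) :
    Measurable (fun p : ℝ × ℝ => OO ξ p.1 p.2) := by
  have hxt := continuous_xt hC1
  have hdd := continuous_dd hC1
  have c1 : Continuous (fun p : ℝ × ℝ => FF (xt ξ p.1 - xt ξ p.2)) :=
    continuous_FF.comp ((hxt.comp continuous_fst).sub (hxt.comp continuous_snd))
  have c2 : Continuous (fun p : ℝ × ℝ => FF (p.1 - p.2)) :=
    continuous_FF.comp (continuous_fst.sub continuous_snd)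
  have c3 : Continuous (fun p : ℝ × ℝ => dd ξ p.1 - 1) :=
    (hdd.comp continuous_fst).sub continuous_const
  exact ((c1.measurable.div c2.measurable).mul c3.measurable)

lemma measurable_HH (hC1 : ContDiffOn ℝ 1 ξ (Set.Icc 0 (2 * π))) :
    Measurable (fun p : ℝ × ℝ => HH ξ p.1 p.2) := by
  have hxt := continuous_xt hC1
  have c1 : Continuous (fun p : ℝ × ℝ => hh (xt ξ p.1 - xt ξ p.2) (p.1 - p.2)) :=
    continuous_hh.comp (((hxt.comp continuous_fst).sub (hxt.comp continuous_snd)).prodMk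
      (continuous_fst.sub continuous_snd))
  have c2 : Continuous (fun p : ℝ × ℝ => (FF (p.1 - p.2))^2) :=
    (continuous_FF.comp (continuous_fst.sub continuous_snd)).pow 2
  exact c1.measurable.div c2.measurable

lemma FF_ne {θ φ : ℝ} (hθ : θ ∈ Set.Icc 0 (2*π)) (hφ : φ ∈ Set.Ioo 0 (2*π)) (hne : θ ≠ φ) :
    FF (θ - φ) ≠ 0 := by
  apply ne_of_gt
  apply FF_pos (sub_ne_zero.2 hne)
  rw [abs_lt]
  constructor <;> [linarith [hθ.1, hφ.2]; linarith [hθ.2, hφ.1]]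

lemma intervalIntegrable_of_bdd {f : ℝ → ℝ} {a b M : ℝ} (hab : a ≤ b)
    (hc : ∀ x ∈ Set.Ioo a b, ContinuousAt f x) (hM : ∀ x ∈ Set.Ioo a b, |f x| ≤ M) :
    IntervalIntegrable f MeasureTheory.volume a b := by
  rw [intervalIntegrable_iff_integrableOn_Ioo_of_le hab]
  have hmeas : MeasureTheory.AEStronglyMeasurable f
      (MeasureTheory.volume.restrict (Set.Ioo a b)) :=
    ContinuousOn.aestronglyMeasurable (fun x hx => (hc x hx).continuousWithinAt)
      measurableSet_Ioo
  apply MeasureTheory.Integrable.mono' (g := fun _ => M)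
    ((MeasureTheory.integrableOn_const_iff (C := M)).2 (Or.inr measure_Ioo_lt_top)) hmeas
  rw [MeasureTheory.ae_restrict_iff' measurableSet_Ioo]
  filter_upwards with x hx
  simpa [Real.norm_eq_abs] using hM x hx

section Core

variable {ξ : ℝ → ℝ} {L : ℝ}

lemma WW_self (φ : ℝ) : WW ξ φ φ = 0 := by simp [WW, GG]

lemma WW_boundary (hdeg : ξ (2 * π) = ξ 0 + 2 * π) {φ : ℝ} (hφ : φ ∈ Set.Ioo 0 (2*π)) :
    WW ξ φ (2*π) = WW ξ φ 0 := by
  have hπ := Real.pi_pos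
  have hIcc0 : (0:ℝ) ∈ Set.Icc 0 (2*π) := ⟨le_refl _, by linarith⟩
  have hIcc2 : (2*π) ∈ Set.Icc 0 (2*π) := ⟨by linarith, le_refl _⟩
  have hGGper : ∀ x : ℝ, GG (x + 2*π) = GG x + 2*π := by
    intro x; simp only [GG, Real.sin_add_two_pi]; ring
  have e1 : xt ξ (2*π) - xt ξ φ = (xt ξ 0 - xt ξ φ) + 2*π := by
    rw [xt_eq hIcc2, xt_eq hIcc0, hdeg]; ring
  have e2 : (2*π : ℝ) - φ = (0 - φ) + 2*π := by ring
  have e3 : FF (2*π - φ) = FF (0 - φ) := by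
    rw [show (2*π : ℝ) - φ = 2*π - φ from rfl, FF_reflect φ, show (0:ℝ) - φ = -φ by ring, FF_neg]
  have num1 : GG (xt ξ (2*π) - xt ξ φ) = GG (xt ξ 0 - xt ξ φ) + 2*π := by
    rw [e1, hGGper]
  have num2 : GG (2*π - φ) = GG (0 - φ) + 2*π := by rw [e2, hGGper]
  unfold WW
  rw [num1, num2, e3]
  ring_nf

lemma hasDerivAt_WW (hC1 : ContDiffOn ℝ 1 ξ (Set.Icc 0 (2 * π)))
    {φ θ : ℝ} (hφ : φ ∈ Set.Ioo 0 (2*π)) (hθ : θ ∈ Set.Ioo 0 (2*π)) (hne : θ ≠ φ) :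
    HasDerivAt (WW ξ φ) (OO ξ θ φ - HH ξ θ φ) θ := by
  have hFb : FF (θ - φ) ≠ 0 := FF_ne (Set.mem_Icc_of_Ioo hθ) hφ hne
  obtain ⟨hxtd, -⟩ := hasDerivAt_xt hC1 hθ
  have hA : HasDerivAt (fun θ => xt ξ θ - xt ξ φ) (dd ξ θ) θ := hxtd.sub_const _
  have hN1 : HasDerivAt (fun θ => GG (xt ξ θ - xt ξ φ))
      (FF (xt ξ θ - xt ξ φ) * dd ξ θ) θ := by
    have := (hasDerivAt_GG (xt ξ θ - xt ξ φ)).comp θ hA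
    simpa [Function.comp_def] using this
  have hN2 : HasDerivAt (fun θ : ℝ => GG (θ - φ)) (FF (θ - φ)) θ := by
    have := (hasDerivAt_GG (θ - φ)).comp θ ((hasDerivAt_id θ).sub_const φ)
    simpa [Function.comp_def] using this
  have hN : HasDerivAt (fun θ => GG (xt ξ θ - xt ξ φ) - GG (θ - φ))
      (FF (xt ξ θ - xt ξ φ) * dd ξ θ - FF (θ - φ)) θ := hN1.sub hN2
  have hDen : HasDerivAt (fun θ : ℝ => FF (θ - φ)) (Real.sin (θ - φ)) θ := by
    have := (hasDerivAt_FF (θ - φ)).comp θ ((hasDerivAt_id θ).sub_const φ)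
    simpa [Function.comp_def] using this
  have hW := hN.div hDen hFb
  have : WW ξ φ = fun θ => (GG (xt ξ θ - xt ξ φ) - GG (θ - φ)) / FF (θ - φ) := rfl
  rw [this]
  refine hW.congr_deriv ?_
  unfold OO HH hh
  field_simp
  ring

lemma continuousAt_OO (hC1 : ContDiffOn ℝ 1 ξ (Set.Icc 0 (2 * π)))
    {φ θ : ℝ} (hFb : FF (θ - φ) ≠ 0) : ContinuousAt (fun θ => OO ξ θ φ) θ := by
  have hxt := continuous_xt hC1
  have hdd := continuous_dd hC1
  apply ContinuousAt.mul
  · apply ContinuousAt.div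
    · exact (continuous_FF.comp ((hxt.sub continuous_const))).continuousAt
    · exact (continuous_FF.comp (continuous_id.sub continuous_const)).continuousAt
    · exact hFb
  · exact (hdd.sub continuous_const).continuousAt

lemma continuousAt_HH (hC1 : ContDiffOn ℝ 1 ξ (Set.Icc 0 (2 * π)))
    {φ θ : ℝ} (hFb : FF (θ - φ) ≠ 0) : ContinuousAt (fun θ => HH ξ θ φ) θ := by
  have hxt := continuous_xt hC1
  apply ContinuousAt.div
  · exact (continuous_hh.comp (((hxt.sub continuous_const)).prodMk
      (continuous_id.sub continuous_const))).continuousAt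
  · exact ((continuous_FF.comp (continuous_id.sub continuous_const)).pow 2).continuousAt
  · exact pow_ne_zero 2 hFb

lemma continuousOn_WW (hC1 : ContDiffOn ℝ 1 ξ (Set.Icc 0 (2 * π)))
    (hL1 : 1 ≤ L)
    (hLip : ∀ x ∈ Set.Icc 0 (2*π), ∀ y ∈ Set.Icc 0 (2*π), |ξ x - ξ y| ≤ L * |x - y|)
    {φ : ℝ} (hφ : φ ∈ Set.Ioo 0 (2*π)) :
    ContinuousOn (WW ξ φ) (Set.Icc 0 (2*π)) := by
  have hπ := Real.pi_pos
  have hxt := continuous_xt hC1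
  intro θ hθ
  by_cases hne : θ = φ
  · subst hne
    -- continuity at the removable singularity
    set C3 := (L^3+1) * π^2 / 12 with hC3
    have hC30 : 0 ≤ C3 := by rw [hC3]; positivity
    have hbound : ∀ x : ℝ, |x - θ| ≤ π → |WW ξ θ x| ≤ C3 * |x - θ| := by
      intro x hx
      have haL : |xt ξ x - xt ξ θ| ≤ L * |x - θ| := by
        have h1 := hLip (prj x) (prj_mem x) (prj θ) (prj_mem θ)
        have h2 := prj_lipschitz x θ
        calc |xt ξ x - xt ξ θ| ≤ L * |prj x - prj θ| := h1
          _ ≤ L * |x - θ| := by nlinarith [abs_nonneg (prj x - prj θ)]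
      have hnum : |GG (xt ξ x - xt ξ θ) - GG (x - θ)| ≤ (L^3+1) * |x - θ|^3 / 6 := by
        refine (abs_sub _ _).trans ?_
        have a1 := abs_GG_le (xt ξ x - xt ξ θ)
        have a2 := abs_GG_le (x - θ)
        have a3 : |xt ξ x - xt ξ θ|^3 ≤ L^3 * |x - θ|^3 := by
          have := pow_le_pow_left₀ (abs_nonneg _) haL 3
          rwa [mul_pow] at this
        linarith
      have hFlow : 2 * (x - θ)^2 / π^2 ≤ FF (x - θ) := FF_lower hx
      apply abs_div_le (FF_nonneg _) (by positivity)
      calc |GG (xt ξ x - xt ξ θ) - GG (x - θ)| ≤ (L^3+1) * |x - θ|^3 / 6 := hnum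
        _ = (C3 * |x - θ|) * (2 * (x-θ)^2/π^2) := by
            rw [hC3]
            have : |x - θ|^3 = |x - θ| * (x - θ)^2 := by
              rw [pow_succ, sq_abs]; ring
            field_simp
            rw [this]
            ring
        _ ≤ (C3 * |x - θ|) * FF (x - θ) := by
            apply mul_le_mul_of_nonneg_left hFlow (by positivity)
    have htend : Filter.Tendsto (WW ξ θ) (nhds θ) (nhds 0) := by
      apply squeeze_zero_norm' (a := fun x => C3 * |x - θ|)
      · have hev : ∀ᶠ x in nhds θ, |x - θ| ≤ π := by
          have : Set.Icc (θ - π) (θ + π) ∈ nhds θ := Icc_mem_nhds (by linarith) (by linarith)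
          filter_upwards [this] with x hx
          rw [abs_le]; constructor <;> [linarith [hx.1]; linarith [hx.2]]
        filter_upwards [hev] with x hx
        simpa [Real.norm_eq_abs] using hbound x hx
      · have : Filter.Tendsto (fun x : ℝ => C3 * |x - θ|) (nhds θ) (nhds (C3 * |θ - θ|)) := by
          apply Continuous.tendsto
          continuity
        simpa using this
    have : ContinuousAt (WW ξ θ) θ := by
      rw [ContinuousAt, WW_self]
      exact htend
    exact this.continuousWithinAt
  · -- regular point
    have hFb : FF (θ - φ) ≠ 0 := FF_ne hθ hφ hne
    apply ContinuousAt.continuousWithinAt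
    apply ContinuousAt.div
    · exact ((continuous_GG.comp (hxt.sub continuous_const)).sub
        (continuous_GG.comp (continuous_id.sub continuous_const))).continuousAt
    · exact (continuous_FF.comp (continuous_id.sub continuous_const)).continuousAt
    · exact hFb

end Core

lemma inner_eq (hC1 : ContDiffOn ℝ 1 ξ (Set.Icc 0 (2 * π)))
    (hmono : MonotoneOn ξ (Set.Icc 0 (2 * π)))
    (hdeg : ξ (2 * π) = ξ 0 + 2 * π)
    (hL1 : 1 ≤ L)
    (hLd : ∀ x ∈ Set.Icc 0 (2*π), |dd ξ x| ≤ L)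
    (hLip : ∀ x ∈ Set.Icc 0 (2*π), ∀ y ∈ Set.Icc 0 (2*π), |ξ x - ξ y| ≤ L * |x - y|)
    {φ : ℝ} (hφ : φ ∈ Set.Ioo 0 (2*π)) :
    ∫ θ in (0:ℝ)..(2*π), OO ξ θ φ = ∫ θ in (0:ℝ)..(2*π), HH ξ θ φ := by
  have hπ := Real.pi_pos
  have hφIcc : φ ∈ Set.Icc 0 (2*π) := Set.mem_Icc_of_Ioo hφ
  have hL0 : (0:ℝ) ≤ L := by linarith
  set MO := CC1 L * (L + 1) with hMO
  set MH := CC2 L with hMH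
  have hOb : ∀ θ ∈ Set.Icc 0 (2*π), |OO ξ θ φ| ≤ MO := by
    intro θ hθ
    exact OO_abs_le hLd (master_bounds hmono hdeg hL1 hLip hθ hφIcc).1 hθ
  have hHb : ∀ θ ∈ Set.Icc 0 (2*π), |HH ξ θ φ| ≤ MH := by
    intro θ hθ
    exact HH_abs_le hL0 (master_bounds hmono hdeg hL1 hLip hθ hφIcc).2.1
  -- integrability on the two pieces
  have hsub1 : Set.Ioo 0 φ ⊆ Set.Icc 0 (2*π) := fun x hx => ⟨hx.1.le, by linarith [hx.2, hφ.2]⟩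
  have hsub2 : Set.Ioo φ (2*π) ⊆ Set.Icc 0 (2*π) := fun x hx => ⟨by linarith [hx.1, hφ.1], hx.2.le⟩
  have hne1 : ∀ x ∈ Set.Ioo 0 φ, FF (x - φ) ≠ 0 :=
    fun x hx => FF_ne (hsub1 hx) hφ (ne_of_lt hx.2)
  have hne2 : ∀ x ∈ Set.Ioo φ (2*π), FF (x - φ) ≠ 0 :=
    fun x hx => FF_ne (hsub2 hx) hφ (ne_of_gt hx.1)
  have intO1 : IntervalIntegrable (fun θ => OO ξ θ φ) MeasureTheory.volume 0 φ :=
    intervalIntegrable_of_bdd hφ.1.le (fun x hx => continuousAt_OO hC1 (hne1 x hx))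
      (fun x hx => hOb x (hsub1 hx))
  have intO2 : IntervalIntegrable (fun θ => OO ξ θ φ) MeasureTheory.volume φ (2*π) :=
    intervalIntegrable_of_bdd hφ.2.le (fun x hx => continuousAt_OO hC1 (hne2 x hx))
      (fun x hx => hOb x (hsub2 hx))
  have intH1 : IntervalIntegrable (fun θ => HH ξ θ φ) MeasureTheory.volume 0 φ :=
    intervalIntegrable_of_bdd hφ.1.le (fun x hx => continuousAt_HH hC1 (hne1 x hx))
      (fun x hx => hHb x (hsub1 hx))
  have intH2 : IntervalIntegrable (fun θ => HH ξ θ φ) MeasureTheory.volume φ (2*π) :=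
    intervalIntegrable_of_bdd hφ.2.le (fun x hx => continuousAt_HH hC1 (hne2 x hx))
      (fun x hx => hHb x (hsub2 hx))
  have intO := intO1.trans intO2
  have intH := intH1.trans intH2
  -- FTC on the two pieces
  have hcontW := continuousOn_WW hC1 hL1 hLip hφ
  have ftc1 : ∫ θ in (0:ℝ)..φ, (OO ξ θ φ - HH ξ θ φ) = WW ξ φ φ - WW ξ φ 0 := by
    apply intervalIntegral.integral_eq_sub_of_hasDeriv_right_of_le (f := WW ξ φ)
      (f' := fun θ => OO ξ θ φ - HH ξ θ φ) hφ.1.le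
    · exact hcontW.mono (Set.Icc_subset_Icc (le_refl _) hφ.2.le)
    · intro x hx
      have hx' : x ∈ Set.Ioo 0 (2*π) := ⟨hx.1, lt_trans hx.2 hφ.2⟩
      exact (hasDerivAt_WW hC1 hφ hx' (ne_of_lt hx.2)).hasDerivWithinAt
    · exact intO1.sub intH1
  have ftc2 : ∫ θ in φ..(2*π), (OO ξ θ φ - HH ξ θ φ) = WW ξ φ (2*π) - WW ξ φ φ := by
    apply intervalIntegral.integral_eq_sub_of_hasDeriv_right_of_le (f := WW ξ φ)
      (f' := fun θ => OO ξ θ φ - HH ξ θ φ) hφ.2.le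
    · exact hcontW.mono (Set.Icc_subset_Icc hφ.1.le (le_refl _))
    · intro x hx
      have hx' : x ∈ Set.Ioo 0 (2*π) := ⟨lt_trans hφ.1 hx.1, hx.2⟩
      exact (hasDerivAt_WW hC1 hφ hx' (ne_of_gt hx.1)).hasDerivWithinAt
    · exact intO2.sub intH2
  have hadd : ∫ θ in (0:ℝ)..(2*π), (OO ξ θ φ - HH ξ θ φ)
      = (∫ θ in (0:ℝ)..φ, (OO ξ θ φ - HH ξ θ φ)) + ∫ θ in φ..(2*π), (OO ξ θ φ - HH ξ θ φ) :=
    (intervalIntegral.integral_add_adjacent_intervals (intO1.sub intH1) (intO2.sub intH2)).symm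
  have hzero : ∫ θ in (0:ℝ)..(2*π), (OO ξ θ φ - HH ξ θ φ) = 0 := by
    rw [hadd, ftc1, ftc2, WW_self, WW_boundary hdeg hφ]
    ring
  have := intervalIntegral.integral_sub intO intH
  rw [hzero] at this
  linarith [this]

end Main
end Aux5

open MeasureTheory


theorem stmt5 (ξ : ℝ → ℝ) (hC1 : ContDiffOn ℝ 1 ξ (Set.Icc 0 (2 * π)))
    (hmono : MonotoneOn ξ (Set.Icc 0 (2 * π)))
    (hdeg : ξ (2 * π) = ξ 0 + 2 * π) :
    0 ≤ (∫ θ in (0:ℝ)..(2 * π), ∫ φ in (0:ℝ)..(2 * π),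
          (1 - Real.cos (ξ θ - ξ φ)) / (1 - Real.cos (θ - φ)) * (deriv ξ θ - 1)) ∧
    ((∫ θ in (0:ℝ)..(2 * π), ∫ φ in (0:ℝ)..(2 * π),
          (1 - Real.cos (ξ θ - ξ φ)) / (1 - Real.cos (θ - φ)) * (deriv ξ θ - 1)) = 0 ↔
      ∃ c : ℝ, ∀ θ ∈ Set.Icc (0:ℝ) (2 * π), ξ θ = θ + c) := by
  have hπ := Real.pi_pos
  have h2π : (0:ℝ) ≤ 2 * π := by linarith
  obtain ⟨L, hL1, hLd, hLip⟩ := exists_L hC1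
  have hL0 : (0:ℝ) ≤ L := by linarith
  have hIoosub : Set.Ioo (0:ℝ) (2*π) ⊆ Set.Icc 0 (2*π) := Set.Ioo_subset_Icc_self
  have hIocsub : Set.Ioc (0:ℝ) (2*π) ⊆ Set.Icc 0 (2*π) := Set.Ioc_subset_Icc_self
  have hOb : ∀ θ ∈ Set.Icc 0 (2*π), ∀ φ ∈ Set.Icc 0 (2*π), |OO ξ θ φ| ≤ CC1 L * (L+1) :=
    fun θ hθ φ hφ => OO_abs_le hLd (master_bounds hmono hdeg hL1 hLip hθ hφ).1 hθ
  have hHb : ∀ θ ∈ Set.Icc 0 (2*π), ∀ φ ∈ Set.Icc 0 (2*π), |HH ξ θ φ| ≤ CC2 L :=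
    fun θ hθ φ hφ => HH_abs_le hL0 (master_bounds hmono hdeg hL1 hLip hθ hφ).2.1
  have hHnn : ∀ θ ∈ Set.Icc 0 (2*π), ∀ φ ∈ Set.Icc 0 (2*π), 0 ≤ HH ξ θ φ :=
    fun θ hθ φ hφ => HH_nonneg (master_bounds hmono hdeg hL1 hLip hθ hφ).2.2
  have hae2π : ∀ᵐ θ : ℝ, θ ≠ 2*π := by
    have h0 : (volume : Measure ℝ) {(2*π:ℝ)} = 0 := measure_singleton _
    rw [MeasureTheory.ae_iff]
    convert h0 using 2
    ext x; simp [not_not]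
  -- Step A+B : replace integrand by the regularized OO
  have stepB : (∫ θ in (0:ℝ)..(2*π), ∫ φ in (0:ℝ)..(2*π),
        (1 - Real.cos (ξ θ - ξ φ)) / (1 - Real.cos (θ - φ)) * (deriv ξ θ - 1))
      = ∫ θ in (0:ℝ)..(2*π), ∫ φ in (0:ℝ)..(2*π), OO ξ θ φ := by
    apply intervalIntegral.integral_congr_ae
    filter_upwards [hae2π] with θ hθne hθmem
    rw [Set.uIoc_of_le h2π] at hθmem
    have hθIoo : θ ∈ Set.Ioo 0 (2*π) := ⟨hθmem.1, lt_of_le_of_ne hθmem.2 hθne⟩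
    apply intervalIntegral.integral_congr
    intro φ hφ
    rw [Set.uIcc_of_le h2π] at hφ
    obtain ⟨-, hdd⟩ := hasDerivAt_xt hC1 hθIoo
    simp only [OO, FF, xt_eq (hIoosub hθIoo), xt_eq hφ, hdd]
  -- Step C : Fubini
  have intOO2 : Integrable (Function.uncurry (OO ξ))
      ((volume.restrict (Set.Ioc 0 (2*π))).prod (volume.restrict (Set.Ioc 0 (2*π)))) := by
    rw [MeasureTheory.Measure.prod_restrict]
    apply Integrable.mono' (g := fun _ => CC1 L * (L+1))
      ((integrableOn_const_iff (C := CC1 L * (L+1))).2 (Or.inr ?_))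
      (((measurable_OO hC1).stronglyMeasurable.aestronglyMeasurable).restrict) ?_
    · rw [MeasureTheory.Measure.prod_prod]
      exact ENNReal.mul_lt_top measure_Ioc_lt_top measure_Ioc_lt_top
    · rw [MeasureTheory.ae_restrict_iff' (measurableSet_Ioc.prod measurableSet_Ioc)]
      filter_upwards with p hp
      have := hOb p.1 (hIocsub hp.1) p.2 (hIocsub hp.2)
      simpa [Real.norm_eq_abs, Function.uncurry] using this
  have stepC : (∫ θ in (0:ℝ)..(2*π), ∫ φ in (0:ℝ)..(2*π), OO ξ θ φ)
      = ∫ φ in (0:ℝ)..(2*π), ∫ θ in (0:ℝ)..(2*π), OO ξ θ φ := by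
    simp only [intervalIntegral.integral_of_le h2π]
    exact MeasureTheory.integral_integral_swap intOO2
  -- Step D : per-φ identity
  have stepD : (∫ φ in (0:ℝ)..(2*π), ∫ θ in (0:ℝ)..(2*π), OO ξ θ φ)
      = ∫ φ in (0:ℝ)..(2*π), ∫ θ in (0:ℝ)..(2*π), HH ξ θ φ := by
    apply intervalIntegral.integral_congr_ae
    filter_upwards [hae2π] with φ hφne hφmem
    rw [Set.uIoc_of_le h2π] at hφmem
    exact inner_eq hC1 hmono hdeg hL1 hLd hLip ⟨hφmem.1, lt_of_le_of_ne hφmem.2 hφne⟩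
  have keyEq : (∫ θ in (0:ℝ)..(2*π), ∫ φ in (0:ℝ)..(2*π),
        (1 - Real.cos (ξ θ - ξ φ)) / (1 - Real.cos (θ - φ)) * (deriv ξ θ - 1))
      = ∫ φ in (0:ℝ)..(2*π), ∫ θ in (0:ℝ)..(2*π), HH ξ θ φ :=
    stepB.trans (stepC.trans stepD)
  have hnn : 0 ≤ ∫ φ in (0:ℝ)..(2*π), ∫ θ in (0:ℝ)..(2*π), HH ξ θ φ := by
    apply intervalIntegral.integral_nonneg h2π
    intro φ hφ
    exact intervalIntegral.integral_nonneg h2π (fun θ hθ => hHnn θ hθ φ hφ)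
  refine ⟨by rw [keyEq]; exact hnn, ?_, ?_⟩
  · -- equality implies affine
    intro hI0
    rw [keyEq] at hI0
    have hHint : ∀ φ₀ ∈ Set.Ioo (0:ℝ) (2*π),
        IntervalIntegrable (fun θ => HH ξ θ φ₀) volume 0 (2*π) := by
      intro φ₀ hφ₀
      have hsub1 : Set.Ioo 0 φ₀ ⊆ Set.Icc 0 (2*π) :=
        fun x hx => ⟨hx.1.le, by linarith [hx.2, hφ₀.2]⟩
      have hsub2 : Set.Ioo φ₀ (2*π) ⊆ Set.Icc 0 (2*π) :=
        fun x hx => ⟨by linarith [hx.1, hφ₀.1], hx.2.le⟩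
      have i1 : IntervalIntegrable (fun θ => HH ξ θ φ₀) volume 0 φ₀ :=
        intervalIntegrable_of_bdd hφ₀.1.le
          (fun x hx => continuousAt_HH hC1 (FF_ne (hsub1 hx) hφ₀ (ne_of_lt hx.2)))
          (fun x hx => hHb x (hsub1 hx) φ₀ (hIoosub hφ₀))
      have i2 : IntervalIntegrable (fun θ => HH ξ θ φ₀) volume φ₀ (2*π) :=
        intervalIntegrable_of_bdd hφ₀.2.le
          (fun x hx => continuousAt_HH hC1 (FF_ne (hsub2 hx) hφ₀ (ne_of_gt hx.1)))
          (fun x hx => hHb x (hsub2 hx) φ₀ (hIoosub hφ₀))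
      exact i1.trans i2
    -- gg is a.e. zero
    set gg : ℝ → ℝ := fun φ => ∫ θ in (0:ℝ)..(2*π), HH ξ θ φ with hggdef
    have hggnn : 0 ≤ᵐ[volume.restrict (Set.Ioc 0 (2*π))] gg := by
      have h : ∀ᵐ φ ∂(volume.restrict (Set.Ioc (0:ℝ) (2*π))), 0 ≤ gg φ := by
        rw [MeasureTheory.ae_restrict_iff' measurableSet_Ioc]
        filter_upwards with φ hφ
        exact intervalIntegral.integral_nonneg h2π (fun θ hθ => hHnn θ hθ φ (hIocsub hφ))
      exact h
    have hggint : Integrable gg (volume.restrict (Set.Ioc 0 (2*π))) := by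
      have hsm : StronglyMeasurable (fun p : ℝ × ℝ => HH ξ p.2 p.1) :=
        ((measurable_HH hC1).comp measurable_swap).stronglyMeasurable
      have hmeas : StronglyMeasurable
          (fun φ => ∫ θ, HH ξ θ φ ∂(volume.restrict (Set.Ioc 0 (2*π)))) :=
        hsm.integral_prod_right'
      have hggeq : gg = fun φ => ∫ θ, HH ξ θ φ ∂(volume.restrict (Set.Ioc 0 (2*π))) := by
        funext φ
        rw [hggdef]
        exact intervalIntegral.integral_of_le h2π
      apply Integrable.mono' (g := fun _ => CC2 L * (2*π))
        ((integrableOn_const_iff (C := CC2 L * (2*π))).2 (Or.inr measure_Ioc_lt_top))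
        (by rw [hggeq]; exact hmeas.aestronglyMeasurable.restrict) ?_
      rw [MeasureTheory.ae_restrict_iff' measurableSet_Ioc]
      filter_upwards with φ hφ
      have hb := intervalIntegral.norm_integral_le_of_norm_le_const
        (C := CC2 L) (f := fun θ => HH ξ θ φ) (a := (0:ℝ)) (b := 2*π) ?_
      · rw [hggdef]
        simp only [Real.norm_eq_abs] at hb ⊢
        calc |∫ θ in (0:ℝ)..(2*π), HH ξ θ φ| ≤ CC2 L * |2*π - 0| := hb
          _ = CC2 L * (2*π) := by rw [abs_of_nonneg (by linarith)]; ring_nf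
      · intro x hx
        rw [Set.uIoc_of_le h2π] at hx
        simpa [Real.norm_eq_abs] using hHb x (hIocsub hx) φ (hIocsub hφ)
    have hgg0 : gg =ᵐ[volume.restrict (Set.Ioc 0 (2*π))] 0 := by
      rw [← MeasureTheory.integral_eq_zero_iff_of_nonneg_ae hggnn hggint]
      rw [← intervalIntegral.integral_of_le h2π]
      exact hI0
    -- pick a good φ₀
    have hrne : volume.restrict (Set.Ioo (0:ℝ) (2*π)) ≠ 0 := by
      simp only [ne_eq, MeasureTheory.Measure.restrict_eq_zero, Real.volume_Ioo,
        ENNReal.ofReal_eq_zero, not_le]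
      linarith
    haveI := MeasureTheory.ae_neBot.2 hrne
    have h1 := ae_restrict_of_ae_restrict_of_subset Set.Ioo_subset_Ioc_self hgg0
    have h2 := MeasureTheory.ae_restrict_mem (μ := volume) measurableSet_Ioo
      (s := Set.Ioo (0:ℝ) (2*π))
    obtain ⟨φ₀, hggz, hφ₀⟩ := (h1.and h2).exists
    have hggz' : (∫ θ in (0:ℝ)..(2*π), HH ξ θ φ₀) = 0 := by simpa [hggdef] using hggz
    have hφ₀Icc : φ₀ ∈ Set.Icc 0 (2*π) := hIoosub hφ₀
    -- HH(·,φ₀) vanishes a.e.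
    have hHnnae : 0 ≤ᵐ[volume.restrict (Set.Ioc (0:ℝ) (2*π))] fun θ => HH ξ θ φ₀ := by
      have h : ∀ᵐ θ ∂(volume.restrict (Set.Ioc (0:ℝ) (2*π))), 0 ≤ HH ξ θ φ₀ := by
        rw [MeasureTheory.ae_restrict_iff' measurableSet_Ioc]
        filter_upwards with θ hθ
        exact hHnn θ (hIocsub hθ) φ₀ hφ₀Icc
      exact h
    have hHz : (fun θ => HH ξ θ φ₀) =ᵐ[volume.restrict (Set.Ioc (0:ℝ) (2*π))] 0 :=
      (intervalIntegral.integral_eq_zero_iff_of_le_of_nonneg_ae h2π hHnnae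
        (hHint φ₀ hφ₀)).1 hggz'
    -- pointwise vanishing by continuity
    have hHzero : ∀ θ ∈ Set.Ioo (0:ℝ) (2*π), θ ≠ φ₀ → HH ξ θ φ₀ = 0 := by
      intro θ hθ hne
      rcases lt_or_gt_of_ne hne with hlt | hgt
      · have hU : Set.EqOn (fun θ => HH ξ θ φ₀) 0 (Set.Ioo 0 φ₀) := by
          apply MeasureTheory.Measure.eqOn_Ioo_of_ae_eq (μ := volume)
          · exact ae_restrict_of_ae_restrict_of_subset
              (show Set.Ioo (0:ℝ) φ₀ ⊆ Set.Ioc 0 (2*π) from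
                fun x hx => ⟨hx.1, by linarith [hx.2, hφ₀.2]⟩) hHz
          · intro x hx
            exact (continuousAt_HH hC1 (FF_ne ⟨hx.1.le, by linarith [hx.2, hφ₀.2]⟩ hφ₀
              (ne_of_lt hx.2))).continuousWithinAt
          · exact continuousOn_const
        exact hU ⟨hθ.1, hlt⟩
      · have hU : Set.EqOn (fun θ => HH ξ θ φ₀) 0 (Set.Ioo φ₀ (2*π)) := by
          apply MeasureTheory.Measure.eqOn_Ioo_of_ae_eq (μ := volume)
          · exact ae_restrict_of_ae_restrict_of_subset
              (show Set.Ioo φ₀ (2*π) ⊆ Set.Ioc 0 (2*π) from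
                fun x hx => ⟨lt_trans hφ₀.1 hx.1, hx.2.le⟩) hHz
          · intro x hx
            exact (continuousAt_HH hC1 (FF_ne ⟨(lt_trans hφ₀.1 hx.1).le, hx.2.le⟩ hφ₀
              (ne_of_gt hx.1))).continuousWithinAt
          · exact continuousOn_const
        exact hU ⟨hgt, hθ.2⟩
    -- extract the affine identity on the open interval
    have hIooEq : ∀ θ ∈ Set.Ioo (0:ℝ) (2*π), ξ θ = θ + (ξ φ₀ - φ₀) := by
      intro θ hθ
      by_cases hne : θ = φ₀
      · rw [hne]; ring
      · have hHz' := hHzero θ hθ hne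
        have hFb : FF (θ - φ₀) ≠ 0 := FF_ne (hIoosub hθ) hφ₀ hne
        have hhz : hh (ξ θ - ξ φ₀) (θ - φ₀) = 0 := by
          have : hh (xt ξ θ - xt ξ φ₀) (θ - φ₀) = 0 := by
            rcases div_eq_zero_iff.1 hHz' with h | h
            · exact h
            · exact absurd h (pow_ne_zero 2 hFb)
          rwa [xt_eq (hIoosub hθ), xt_eq hφ₀Icc] at this
        have hIcc0 : (0:ℝ) ∈ Set.Icc 0 (2*π) := ⟨le_refl _, h2π⟩
        have hIcc2 : (2*π) ∈ Set.Icc 0 (2*π) := ⟨h2π, le_refl _⟩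
        rcases lt_or_gt_of_ne hne with hlt | hgt
        · -- θ < φ₀
          have h1 : 0 ≤ ξ φ₀ - ξ θ := sub_nonneg.2 (hmono (hIoosub hθ) hφ₀Icc hlt.le)
          have h2 : ξ φ₀ - ξ θ ≤ 2*π := by
            have e1 : ξ φ₀ ≤ ξ (2*π) := hmono hφ₀Icc hIcc2 hφ₀.2.le
            have e2 : ξ 0 ≤ ξ θ := hmono hIcc0 (hIoosub hθ) hθ.1.le
            rw [hdeg] at e1; linarith
          have hres : ξ φ₀ - ξ θ = φ₀ - θ := by
            apply hh_eq_zero h1 h2 (by linarith [hlt] : (0:ℝ) < φ₀ - θ)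
              (by linarith [hθ.1, hφ₀.2] : φ₀ - θ < 2*π)
            rw [← hh_neg_neg]
            rw [show -(ξ φ₀ - ξ θ) = ξ θ - ξ φ₀ by ring, show -(φ₀ - θ) = θ - φ₀ by ring]
            exact hhz
          linarith
        · -- φ₀ < θ
          have h1 : 0 ≤ ξ θ - ξ φ₀ := sub_nonneg.2 (hmono hφ₀Icc (hIoosub hθ) hgt.le)
          have h2 : ξ θ - ξ φ₀ ≤ 2*π := by
            have e1 : ξ θ ≤ ξ (2*π) := hmono (hIoosub hθ) hIcc2 hθ.2.le
            have e2 : ξ 0 ≤ ξ φ₀ := hmono hIcc0 hφ₀Icc hφ₀.1.le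
            rw [hdeg] at e1; linarith
          have hres : ξ θ - ξ φ₀ = θ - φ₀ :=
            hh_eq_zero h1 h2 (by linarith [hgt] : (0:ℝ) < θ - φ₀)
              (by linarith [hθ.2, hφ₀.1] : θ - φ₀ < 2*π) hhz
          linarith
    -- extend to the closed interval by continuity
    refine ⟨ξ φ₀ - φ₀, ?_⟩
    intro x hx
    have hclos : x ∈ closure (Set.Ioo (0:ℝ) (2*π)) := by
      rw [closure_Ioo (by linarith : (0:ℝ) ≠ 2*π)]
      exact hx
    haveI hnb := mem_closure_iff_nhdsWithin_neBot.1 hclos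
    have t1 : Filter.Tendsto ξ (nhdsWithin x (Set.Ioo 0 (2*π))) (nhds (ξ x)) :=
      (hC1.continuousOn x hx).mono hIoosub
    have t2 : Filter.Tendsto (fun θ : ℝ => θ + (ξ φ₀ - φ₀)) (nhdsWithin x (Set.Ioo 0 (2*π)))
        (nhds (x + (ξ φ₀ - φ₀))) :=
      ((continuous_id.add continuous_const).tendsto x).mono_left nhdsWithin_le_nhds
    have t3 : Filter.Tendsto ξ (nhdsWithin x (Set.Ioo 0 (2*π))) (nhds (x + (ξ φ₀ - φ₀))) := by
      apply t2.congr'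
      filter_upwards [eventually_mem_nhdsWithin] with θ hθ
      exact (hIooEq θ hθ).symm
    exact tendsto_nhds_unique t1 t3
  · -- converse : affine implies zero
    rintro ⟨c, hc⟩
    have hinner : ∀ θ ∈ Set.Ioo (0:ℝ) (2*π),
        (∫ φ in (0:ℝ)..(2*π),
          (1 - Real.cos (ξ θ - ξ φ)) / (1 - Real.cos (θ - φ)) * (deriv ξ θ - 1)) = 0 := by
      intro θ hθ
      have hd : deriv ξ θ = 1 := by
        have hev : ξ =ᶠ[nhds θ] fun x => x + c := by
          filter_upwards [Ioo_mem_nhds hθ.1 hθ.2] with x hx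
          exact hc x (hIoosub hx)
        rw [hev.deriv_eq]
        exact ((hasDerivAt_id θ).add_const c).deriv
      simp [hd]
    calc (∫ θ in (0:ℝ)..(2*π), ∫ φ in (0:ℝ)..(2*π),
          (1 - Real.cos (ξ θ - ξ φ)) / (1 - Real.cos (θ - φ)) * (deriv ξ θ - 1))
        = ∫ θ in (0:ℝ)..(2*π), (0:ℝ) := by
          apply intervalIntegral.integral_congr_ae
          filter_upwards [hae2π] with θ hθne hθmem
          rw [Set.uIoc_of_le h2π] at hθmem
          exact hinner θ ⟨hθmem.1, lt_of_le_of_ne hθmem.2 hθne⟩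
      _ = 0 := intervalIntegral.integral_zero
end

section
/- For every integer n ≥ 2 and every real ρ ≥ √7, the coefficient B_n = ρ^(−2n) − (n/4)(ρ + ρ⁻¹)² + 2n + (n/2)(ρ² − 4 − ρ⁻²) satisfies B_n ≥ n·ρ²/7. -/
theorem stmt8 (n : ℕ) (hn : 2 ≤ n) (ρ : ℝ) (hρ : Real.sqrt 7 ≤ ρ) :
    (n : ℝ) * ρ ^ 2 / 7 ≤
      ρ ^ (-(2 * (n : ℤ))) - ((n : ℝ) / 4) * (ρ + ρ⁻¹) ^ 2 + 2 * n +
        ((n : ℝ) / 2) * (ρ ^ 2 - 4 - (ρ ^ 2)⁻¹) := by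
  have hρ0 : 0 < ρ :=
    lt_of_lt_of_le (Real.sqrt_pos.mpr (by norm_num)) hρ
  have h7 : (7 : ℝ) ≤ ρ ^ 2 := by
    nlinarith [Real.sq_sqrt (by norm_num : (0:ℝ) ≤ 7), Real.sqrt_nonneg 7]
  have hz : (0 : ℝ) ≤ ρ ^ (-(2 * (n : ℤ))) := zpow_nonneg hρ0.le _
  have hn' : (2 : ℝ) ≤ (n : ℝ) := by exact_mod_cast hn
  have h1 : ρ⁻¹ * ρ = 1 := inv_mul_cancel₀ hρ0.ne'
  have e : (ρ⁻¹) ^ 2 = (ρ ^ 2)⁻¹ := inv_pow ρ 2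
  have h2 : (ρ ^ 2)⁻¹ * ρ ^ 2 = 1 := inv_mul_cancel₀ (by positivity)
  have key : ρ ^ 2 / 7 ≤ ρ ^ 2 / 4 - 1 / 2 - (3 / 4) * (ρ ^ 2)⁻¹ := by
    nlinarith [h2, h7, mul_self_nonneg (ρ ^ 2 - 7), mul_pos hρ0 hρ0]
  have expand : -(((n : ℝ) / 4) * (ρ + ρ⁻¹) ^ 2) + 2 * n +
      ((n : ℝ) / 2) * (ρ ^ 2 - 4 - (ρ ^ 2)⁻¹) =
      (n : ℝ) * (ρ ^ 2 / 4 - 1 / 2 - (3 / 4) * (ρ ^ 2)⁻¹) := by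
    linear_combination (-(n : ℝ) / 2) * h1 - ((n : ℝ) / 4) * e
  have hmul := mul_le_mul_of_nonneg_left key (by linarith : (0:ℝ) ≤ (n : ℝ))
  linarith [hmul, hz, expand]
end

section
/- For ρ ≥ √7, define A₂ = ρ⁴ − (1/2)(ρ+ρ⁻¹)² − 4 − 3(ρ² − 4 − ρ⁻²), B₂ = ρ⁻⁴ − (1/2)(ρ+ρ⁻¹)² + 4 + (ρ² − 4 − ρ⁻²), C₂ = 1 − (1/2)(ρ+ρ⁻¹)² − (ρ² − 4 − ρ⁻²). Then A₂ > 0, B₂ > 0, and A₂·B₂ > C₂². -/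
theorem stmt10 (ρ : ℝ) (hρ : Real.sqrt 7 ≤ ρ) :
    0 < ρ ^ 4 - (1 / 2) * (ρ + ρ⁻¹) ^ 2 - 4 - 3 * (ρ ^ 2 - 4 - (ρ ^ 2)⁻¹) ∧
    0 < (ρ ^ 4)⁻¹ - (1 / 2) * (ρ + ρ⁻¹) ^ 2 + 4 + (ρ ^ 2 - 4 - (ρ ^ 2)⁻¹) ∧
    (1 - (1 / 2) * (ρ + ρ⁻¹) ^ 2 - (ρ ^ 2 - 4 - (ρ ^ 2)⁻¹)) ^ 2 <
      (ρ ^ 4 - (1 / 2) * (ρ + ρ⁻¹) ^ 2 - 4 - 3 * (ρ ^ 2 - 4 - (ρ ^ 2)⁻¹)) *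
        ((ρ ^ 4)⁻¹ - (1 / 2) * (ρ + ρ⁻¹) ^ 2 + 4 + (ρ ^ 2 - 4 - (ρ ^ 2)⁻¹)) := by
  have h0 : 0 < ρ := lt_of_lt_of_le (Real.sqrt_pos.mpr (by norm_num)) hρ
  have h7 : (7:ℝ) ≤ ρ ^ 2 := by
    nlinarith [Real.sq_sqrt (by norm_num : (0:ℝ) ≤ 7), Real.sqrt_nonneg 7]
  have hne : ρ ≠ 0 := ne_of_gt h0
  have h2 : (0:ℝ) < ρ ^ 2 := by positivity
  set t : ℝ := ρ ^ 2 with ht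
  have e1 : ρ ^ 4 - (1 / 2) * (ρ + ρ⁻¹) ^ 2 - 4 - 3 * (ρ ^ 2 - 4 - (ρ ^ 2)⁻¹)
      = (2*t^3 - 7*t^2 + 14*t + 5) / (2*t) := by
    field_simp [ht]; ring
  have e2 : (ρ ^ 4)⁻¹ - (1 / 2) * (ρ + ρ⁻¹) ^ 2 + 4 + (ρ ^ 2 - 4 - (ρ ^ 2)⁻¹)
      = (t^3 - 2*t^2 - 3*t + 2) / (2*t^2) := by
    field_simp [ht]; ring
  have e3 : 1 - (1 / 2) * (ρ + ρ⁻¹) ^ 2 - (ρ ^ 2 - 4 - (ρ ^ 2)⁻¹)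
      = (-3*t^2 + 8*t + 1) / (2*t) := by
    field_simp [ht]; ring
  have hA : 0 < 2*t^3 - 7*t^2 + 14*t + 5 := by nlinarith
  have hB : 0 < t^3 - 2*t^2 - 3*t + 2 := by nlinarith
  refine ⟨by rw [e1]; positivity, by rw [e2]; positivity, ?_⟩
  rw [e1, e2, e3, div_mul_div_comm, div_pow, div_lt_div_iff₀ (by positivity) (by positivity)]
  nlinarith [sq_nonneg t, mul_pos h2 h2, mul_pos (mul_pos h2 h2) h2,
    mul_nonneg (mul_nonneg (sq_nonneg t) (sq_nonneg t)) (sub_nonneg.mpr h7),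
    mul_nonneg (mul_nonneg (mul_nonneg (sq_nonneg t) (sq_nonneg t)) (sub_nonneg.mpr h7)) (sub_nonneg.mpr h7)]
end

section
/- For every integer n ≥ 3 and every real ρ ≥ √7: ρ^(2n) − (n² − n/4)·ρ² > 7·(1/2 − 1/(4n))²·n³·ρ². -/
lemma aux1 : ∀ n : ℕ, 4 ≤ n → 2 * n ^ 3 < 7 ^ (n - 1) := by
  intro n hn
  induction n with
  | zero => omega
  | succ m ih =>
    rcases Nat.lt_or_ge m 4 with h | h
    · have hm : m = 3 := by omega
      subst hm; norm_num
    · have h1 := ih (by omega)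
      have h2 : m + 1 - 1 = (m - 1) + 1 := by omega
      rw [h2, pow_succ]
      have h3 : 2 * (m + 1) ^ 3 ≤ 7 * (2 * m ^ 3) := by nlinarith [h, Nat.mul_le_mul h h]
      calc 2 * (m + 1) ^ 3 ≤ 7 * (2 * m ^ 3) := h3
        _ < 7 * 7 ^ (m - 1) := by
            omega
        _ = 7 ^ (m - 1) * 7 := by ring

lemma key_s11 (n : ℕ) (hn : 3 ≤ n) :
    7 * (1 / 2 - 1 / (4 * (n : ℝ))) ^ 2 * (n : ℝ) ^ 3 + ((n : ℝ) ^ 2 - (n : ℝ) / 4)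
      < 7 ^ (n - 1) := by
  rcases Nat.lt_or_ge n 4 with h | h
  · have : n = 3 := by omega
    subst this
    norm_num
  · have hN : (4 : ℝ) ≤ (n : ℝ) := by exact_mod_cast h
    have hn0 : (0 : ℝ) < (n : ℝ) := by linarith
    have hx : (1 / 2 - 1 / (4 * (n : ℝ))) ^ 2 < 1 / 4 := by
      have h1 : 0 < 1 / (4 * (n : ℝ)) := by positivity
      have h2 : 1 / (4 * (n : ℝ)) ≤ 1 / 16 := by
        rw [div_le_div_iff₀ (by positivity) (by norm_num)]
        linarith
      nlinarith
    have h2 : 2 * (n : ℝ) ^ 3 < 7 ^ (n - 1) := by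
      have := aux1 n h
      have : ((2 * n ^ 3 : ℕ) : ℝ) < ((7 ^ (n - 1) : ℕ) : ℝ) := by exact_mod_cast this
      push_cast at this
      linarith
    nlinarith [mul_lt_mul_of_pos_left hx (show (0:ℝ) < 7 * (n:ℝ)^3 by positivity),
      mul_le_mul_of_nonneg_left hN (sq_nonneg (n:ℝ))]

theorem stmt11 (n : ℕ) (hn : 3 ≤ n) (ρ : ℝ) (hρ : Real.sqrt 7 ≤ ρ) :
    7 * (1 / 2 - 1 / (4 * (n : ℝ))) ^ 2 * (n : ℝ) ^ 3 * ρ ^ 2 <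
      ρ ^ (2 * n) - ((n : ℝ) ^ 2 - (n : ℝ) / 4) * ρ ^ 2 := by
  have h7 : (7 : ℝ) ≤ ρ ^ 2 := by
    have h0 : (0:ℝ) ≤ Real.sqrt 7 := Real.sqrt_nonneg 7
    nlinarith [Real.sq_sqrt (by norm_num : (0:ℝ) ≤ 7)]
  have hρ2 : (0 : ℝ) < ρ ^ 2 := by linarith
  have hpow : 7 ^ (n - 1) * ρ ^ 2 ≤ ρ ^ (2 * n) := by
    have e1 : ρ ^ (2 * n) = (ρ ^ 2) ^ ((n - 1) + 1) := by
      rw [pow_mul]; congr 1; omega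
    rw [e1, pow_succ]
    exact mul_le_mul_of_nonneg_right
      (pow_le_pow_left₀ (by norm_num) h7 _) (le_of_lt hρ2)
  have hk := key_s11 n hn
  nlinarith [mul_lt_mul_of_pos_right hk hρ2]
end

section
/- For every integer m ≥ 2 and every real ρ ≥ √7, B₋ₘ = ρ^(2m) + (m/4)(ρ + ρ⁻¹)² − 2m + ((2m² + m)/2)(ρ² − 4 − ρ⁻²) satisfies B₋ₘ > (49/48)·m³·ρ². -/
lemma aux_pow7 (n : ℕ) (hn : 3 ≤ n) : 8 * n ^ 3 ≤ 7 ^ n := by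
  induction n with
  | zero => omega
  | succ k ih =>
    rcases Nat.lt_or_ge k 3 with hk | hk
    · have : k = 2 := by omega
      subst this; norm_num
    · have h := ih (by omega)
      have e0 : 7 ^ (k + 1) = 7 * 7 ^ k := by ring
      have e1 : 3 * k ^ 2 ≤ k ^ 3 := by nlinarith [hk]
      have e2 : 3 * k ≤ k ^ 2 := by nlinarith [hk]
      have e3 : 27 ≤ k ^ 3 := by nlinarith [hk]
      rw [e0]
      nlinarith [h, e1, e2, e3]

theorem stmt13 (m : ℕ) (hm : 2 ≤ m) (ρ : ℝ) (hρ : Real.sqrt 7 ≤ ρ) :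
    (49 / 48) * (m : ℝ) ^ 3 * ρ ^ 2 <
      ρ ^ (2 * m) + ((m : ℝ) / 4) * (ρ + ρ⁻¹) ^ 2 - 2 * m +
        ((2 * (m : ℝ) ^ 2 + m) / 2) * (ρ ^ 2 - 4 - (ρ ^ 2)⁻¹) := by
  have h7 : (0:ℝ) < 7 := by norm_num
  have hs : (0:ℝ) < Real.sqrt 7 := Real.sqrt_pos.2 h7
  have hρ0 : 0 < ρ := lt_of_lt_of_le hs hρ
  have hx : 7 ≤ ρ ^ 2 := by
    nlinarith [Real.sq_sqrt (le_of_lt h7), Real.sqrt_nonneg 7, hρ]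
  have hx0 : (0:ℝ) < ρ ^ 2 := by positivity
  have hv0 : (0:ℝ) < (ρ ^ 2)⁻¹ := by positivity
  have hxv : ρ ^ 2 * (ρ ^ 2)⁻¹ = 1 := mul_inv_cancel₀ (ne_of_gt hx0)
  have hv7 : (ρ ^ 2)⁻¹ ≤ 1 / 7 := by
    rw [inv_le_comm₀ hx0 (by norm_num)]
    linarith
  have hsq : (ρ + ρ⁻¹) ^ 2 = ρ ^ 2 + 2 + (ρ ^ 2)⁻¹ := by
    field_simp
    ring
  rw [pow_mul]
  rcases eq_or_lt_of_le hm with h2 | h3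
  · -- m = 2
    subst h2
    push_cast
    norm_num
    nlinarith [hsq, hx, hv7, hv0, sq_nonneg (ρ^2 - 7)]
  · -- m ≥ 3
    obtain ⟨k, rfl⟩ : ∃ k, m = k + 1 := ⟨m - 1, by omega⟩
    have hk : 2 ≤ k := by omega
    have hpow7 : (8:ℝ) * ((k:ℝ) + 1) ^ 3 ≤ 7 ^ (k + 1) := by
      exact_mod_cast aux_pow7 (k + 1) (by omega)
    have hxk : (7:ℝ) ^ k ≤ (ρ ^ 2) ^ k := pow_le_pow_left₀ (by norm_num) hx k
    have hxm : (8 / 7) * ((k:ℝ) + 1) ^ 3 * ρ ^ 2 ≤ (ρ ^ 2) ^ (k + 1) := by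
      have h1 : (8 / 7 : ℝ) * ((k:ℝ) + 1) ^ 3 ≤ 7 ^ k := by
        have h7s : (7:ℝ) ^ (k + 1) = 7 ^ k * 7 := pow_succ 7 k
        rw [h7s] at hpow7
        nlinarith [hpow7]
      calc (8 / 7) * ((k:ℝ) + 1) ^ 3 * ρ ^ 2 ≤ 7 ^ k * ρ ^ 2 :=
            mul_le_mul_of_nonneg_right h1 hx0.le
        _ ≤ (ρ ^ 2) ^ k * ρ ^ 2 := mul_le_mul_of_nonneg_right hxk hx0.le
        _ = (ρ ^ 2) ^ (k + 1) := (pow_succ _ _).symm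
    have hn : (3:ℝ) ≤ (k:ℝ) + 1 := by
      have : (2:ℝ) ≤ (k:ℝ) := by exact_mod_cast hk
      linarith
    push_cast
    nlinarith [hxm, hsq, hx, hv7, hv0, hn,
      mul_nonneg (mul_nonneg (by linarith : (0:ℝ) ≤ (k:ℝ)+1) (by linarith : (0:ℝ) ≤ (k:ℝ)+1)) (by linarith : (0:ℝ) ≤ ρ^2 - 7),
      mul_nonneg (mul_nonneg (mul_nonneg (by linarith : (0:ℝ) ≤ (k:ℝ)+1) (by linarith : (0:ℝ) ≤ (k:ℝ)+1)) (by linarith : (0:ℝ) ≤ (k:ℝ)+1)) (by linarith : (0:ℝ) ≤ ρ^2 - 7),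
      mul_nonneg (mul_nonneg (by linarith : (0:ℝ) ≤ (k:ℝ)+1) (by linarith : (0:ℝ) ≤ (k:ℝ)+1)) (by linarith : (0:ℝ) ≤ 1/7 - (ρ^2)⁻¹)]
end

section
/- Let h be holomorphic on the annulus A(1,R) = {z ∈ ℂ : 1 < |z| < R} with Laurent expansion h(z) = Σ_{n∈ℤ} a_n zⁿ, and let U(ρ) = Σ_{n∈ℤ} |a_n|² ρ^(2n) be the mean of |h|² over the circle of radius ρ. Then for all 1 < ρ < R: (1/ρ)·d/dρ[ ρ³ · d/dρ (U(ρ)/ρ²) ] = 4·Σ_{n∈ℤ} n(n−1)|a_n|² ρ^(2n−2) ≥ 0. -/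
open scoped Topology
open Filter

lemma geoAux {r : ℝ} (h0 : 0 ≤ r) (h1 : r < 1) :
    Summable (fun n : ℕ => ((n : ℝ) + 1) ^ 2 * r ^ n) := by
  have hr : ‖r‖ < 1 := by rw [Real.norm_eq_abs, abs_of_nonneg h0]; exact h1
  have h2 := summable_pow_mul_geometric_of_norm_lt_one (k := 2) (r := r) hr
  have hone := summable_pow_mul_geometric_of_norm_lt_one (k := 1) (r := r) hr
  have hzero := summable_geometric_of_norm_lt_one hr
  have := (h2.add ((hone.mul_left 2).add hzero))
  exact this.congr (fun n => by push_cast; ring)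

lemma zpowBound {A B t : ℝ} (hA : 0 < A) (h1 : A ≤ t) (h2 : t ≤ B) (e : ℤ) :
    t ^ e ≤ A ^ e + B ^ e := by
  have ht : 0 < t := lt_of_lt_of_le hA h1
  have hB : 0 < B := lt_of_lt_of_le ht h2
  rcases le_or_gt 0 e with he | he
  · obtain ⟨n, rfl⟩ := Int.eq_ofNat_of_zero_le he
    have : t ^ (n : ℤ) ≤ B ^ (n : ℤ) := by
      rw [zpow_natCast, zpow_natCast]; exact pow_le_pow_left₀ ht.le h2 n
    have hApos : (0:ℝ) < A ^ (n : ℤ) := zpow_pos hA _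
    linarith
  · have hne : 0 ≤ -e := by omega
    obtain ⟨n, hn⟩ := Int.eq_ofNat_of_zero_le hne
    have key : A ^ (-e) ≤ t ^ (-e) := by
      rw [hn, zpow_natCast, zpow_natCast]; exact pow_le_pow_left₀ hA.le h1 n
    have : t ^ e ≤ A ^ e := by
      have h := inv_anti₀ (zpow_pos hA (-e)) key
      rw [← zpow_neg, ← zpow_neg] at h; simpa using h
    have hBpos : (0:ℝ) < B ^ e := zpow_pos hB _
    linarith

lemma sqShift {A ρ t : ℝ} (hρ : ρ ≠ 0) (n : ℕ) :
    A ^ 2 * (t ^ 2) ^ n = (A * ρ ^ n) ^ 2 * ((t / ρ) ^ 2) ^ n := by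
  field_simp
  simp only [div_pow, ← pow_mul, mul_comm n 2]
  field_simp

lemma sqShiftNeg {A ρ t : ℝ} (hρ : ρ ≠ 0) (ht : t ≠ 0) (n : ℕ) :
    A ^ 2 * ((t ^ 2) ^ n)⁻¹ = (A * (ρ ^ n)⁻¹) ^ 2 * ((ρ / t) ^ 2) ^ n := by
  field_simp
  simp only [div_pow, ← pow_mul, mul_comm n 2]
  field_simp

lemma masterSummable {R : ℝ} {a : ℤ → ℂ}
    (hsum : ∀ ρ : ℝ, 1 < ρ → ρ < R →
      Summable (fun n : ℤ => ‖a n‖ * ρ ^ n))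
    {t : ℝ} (ht1 : 1 < t) (htR : t < R) :
    Summable (fun n : ℤ =>
      ((n.natAbs : ℝ) + 1) ^ 2 * ‖a n‖ ^ 2 * t ^ (2 * n)) := by
  set ρ₁ : ℝ := (1 + t) / 2 with hρ₁def
  set ρ₂ : ℝ := (t + R) / 2 with hρ₂def
  have hρ₁1 : 1 < ρ₁ := by rw [hρ₁def]; linarith
  have hρ₁t : ρ₁ < t := by rw [hρ₁def]; linarith
  have hρ₂t : t < ρ₂ := by rw [hρ₂def]; linarith
  have hρ₂R : ρ₂ < R := by rw [hρ₂def]; linarith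
  have ht0 : 0 < t := by linarith
  have hρ₁0 : 0 < ρ₁ := by linarith
  have hρ₂0 : 0 < ρ₂ := by linarith
  have hS₁ := hsum ρ₁ hρ₁1 (by linarith)
  have hS₂ := hsum ρ₂ (by linarith) hρ₂R
  set C₁ : ℝ := ∑' n : ℤ, ‖a n‖ * ρ₁ ^ n with hC₁
  set C₂ : ℝ := ∑' n : ℤ, ‖a n‖ * ρ₂ ^ n with hC₂
  have hb₁ : ∀ n : ℤ, ‖a n‖ * ρ₁ ^ n ≤ C₁ := fun n =>
    hS₁.le_tsum n (fun m _ => mul_nonneg (norm_nonneg _) (zpow_pos hρ₁0 _).le)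
  have hb₂ : ∀ n : ℤ, ‖a n‖ * ρ₂ ^ n ≤ C₂ := fun n =>
    hS₂.le_tsum n (fun m _ => mul_nonneg (norm_nonneg _) (zpow_pos hρ₂0 _).le)
  apply Summable.of_nat_of_neg
  · -- n ≥ 0 side: compare with geometric with ratio (t/ρ₂)^2
    have hr0 : (0:ℝ) ≤ (t / ρ₂) ^ 2 := sq_nonneg _
    have hr1 : (t / ρ₂) ^ 2 < 1 := by
      have : t / ρ₂ < 1 := (div_lt_one hρ₂0).2 hρ₂t
      nlinarith [div_pos ht0 hρ₂0]
    apply Summable.of_nonneg_of_le _ _ ((geoAux hr0 hr1).mul_right (C₂ ^ 2))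
    · intro n
      positivity
    · intro n
      have hnat : (((n:ℤ).natAbs : ℝ)) = (n : ℝ) := by simp
      have hzp : t ^ (2 * (n:ℤ)) = (t ^ 2) ^ n := by
        rw [show (2 * (n:ℤ)) = ((2 * n : ℕ) : ℤ) by push_cast; ring, zpow_natCast, pow_mul]
      have hzp2 : ρ₂ ^ ((n:ℤ)) = ρ₂ ^ n := zpow_natCast ρ₂ n
      have e1 : (((n:ℤ).natAbs : ℝ) + 1) ^ 2 * ‖a n‖ ^ 2 * t ^ (2 * (n:ℤ))
          = (((n:ℝ) + 1) ^ 2 * ((t / ρ₂) ^ 2) ^ n) * (‖a n‖ * ρ₂ ^ n) ^ 2 := by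
        rw [hnat, hzp, mul_assoc, sqShift (ne_of_gt hρ₂0) n]
        ring
      rw [e1]
      have key : (‖a n‖ * ρ₂ ^ n) ^ 2 ≤ C₂ ^ 2 := by
        apply pow_le_pow_left₀ (by positivity)
        rw [← hzp2]; exact hb₂ n
      exact mul_le_mul_of_nonneg_left key (by positivity)
  · -- n < 0 side: compare with geometric with ratio (ρ₁/t)^2
    have hr0 : (0:ℝ) ≤ (ρ₁ / t) ^ 2 := sq_nonneg _
    have hr1 : (ρ₁ / t) ^ 2 < 1 := by
      have : ρ₁ / t < 1 := (div_lt_one ht0).2 hρ₁t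
      nlinarith [div_pos hρ₁0 ht0]
    apply Summable.of_nonneg_of_le _ _ ((geoAux hr0 hr1).mul_right (C₁ ^ 2))
    · intro n
      positivity
    · intro n
      have hnat : ((((-n:ℤ)).natAbs : ℝ)) = (n : ℝ) := by simp
      have hzp : t ^ (2 * (-(n:ℤ))) = ((t ^ 2) ^ n)⁻¹ := by
        rw [mul_neg, zpow_neg, show (2 * (n:ℤ)) = ((2 * n : ℕ) : ℤ) by push_cast; ring,
          zpow_natCast, pow_mul]
      have hzp2 : ρ₁ ^ (-(n:ℤ)) = (ρ₁ ^ n)⁻¹ := by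
        rw [zpow_neg, zpow_natCast]
      have e1 : ((((-n:ℤ)).natAbs : ℝ) + 1) ^ 2 * ‖a (-n)‖ ^ 2 * t ^ (2 * (-(n:ℤ)))
          = (((n:ℝ) + 1) ^ 2 * ((ρ₁ / t) ^ 2) ^ n) * (‖a (-n)‖ * ρ₁ ^ (-(n:ℤ))) ^ 2 := by
        rw [hnat, hzp, hzp2, mul_assoc, sqShiftNeg (ne_of_gt hρ₁0) (ne_of_gt ht0) n]
        ring
      rw [e1]
      have key : (‖a (-n)‖ * ρ₁ ^ (-(n:ℤ))) ^ 2 ≤ C₁ ^ 2 := by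
        apply pow_le_pow_left₀ (by positivity)
        exact hb₁ (-n)
      exact mul_le_mul_of_nonneg_left key (by positivity)

lemma termDeriv {R : ℝ} (c : ℤ → ℝ) (k : ℤ)
    (hs : ∀ t : ℝ, 1 < t → t < R →
      Summable (fun n : ℤ => (((2*n+k).natAbs : ℝ) + 1) * |c n| * t ^ (2*n+k)))
    {t₀ : ℝ} (h1 : 1 < t₀) (h2 : t₀ < R) :
    HasDerivAt (fun t : ℝ => ∑' n : ℤ, c n * t ^ (2*n+k))
      (∑' n : ℤ, c n * ((2*n+k : ℤ) : ℝ) * t₀ ^ (2*n+k-1)) t₀ := by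
  set ρ₁ : ℝ := (1 + t₀) / 2 with hρ₁def
  set ρ₂ : ℝ := (t₀ + R) / 2 with hρ₂def
  have hρ₁1 : 1 < ρ₁ := by rw [hρ₁def]; linarith
  have hρ₁t : ρ₁ < t₀ := by rw [hρ₁def]; linarith
  have hρ₂t : t₀ < ρ₂ := by rw [hρ₂def]; linarith
  have hρ₂R : ρ₂ < R := by rw [hρ₂def]; linarith
  have hρ₁0 : 0 < ρ₁ := by linarith
  set s : Set ℝ := Set.Ioo ρ₁ ρ₂ with hsdef
  have hso : IsOpen s := isOpen_Ioo
  have hmem : t₀ ∈ s := ⟨hρ₁t, hρ₂t⟩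
  have hts' : ∀ t ∈ s, 1 < t ∧ t < R := fun t ht => ⟨lt_trans hρ₁1 ht.1, lt_trans ht.2 hρ₂R⟩
  set u : ℤ → ℝ :=
    fun n => (((2*n+k).natAbs : ℝ) + 1) * |c n| * (ρ₁ ^ (2*n+k) + ρ₂ ^ (2*n+k)) with hudef
  have hu : Summable u := by
    have := (hs ρ₁ hρ₁1 (by linarith)).add (hs ρ₂ (by linarith) hρ₂R)
    exact this.congr (fun n => by rw [hudef]; ring)
  have hbound : ∀ (n : ℤ) (t : ℝ), t ∈ s →
      ‖c n * ((2*n+k : ℤ) : ℝ) * t ^ (2*n+k-1)‖ ≤ u n := by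
    intro n t ht
    have ht1 : 1 < t := (hts' t ht).1
    have ht0 : 0 < t := by linarith
    have hA : |((2*n+k : ℤ) : ℝ)| ≤ ((2*n+k).natAbs : ℝ) + 1 := by
      rw [Nat.cast_natAbs, Int.cast_abs]; linarith [abs_nonneg ((2*n+k : ℤ) : ℝ)]
    have hB : t ^ (2*n+k-1) ≤ ρ₁ ^ (2*n+k) + ρ₂ ^ (2*n+k) :=
      le_trans (zpow_le_zpow_right₀ ht1.le (by omega)) (zpowBound hρ₁0 ht.1.le ht.2.le _)
    have htp : (0:ℝ) ≤ t ^ (2*n+k-1) := (zpow_pos ht0 _).le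
    rw [Real.norm_eq_abs, abs_mul, abs_mul, abs_of_pos (zpow_pos ht0 _), hudef]
    calc |c n| * |((2*n+k : ℤ) : ℝ)| * t ^ (2*n+k-1)
        ≤ |c n| * (((2*n+k).natAbs : ℝ) + 1) * (ρ₁ ^ (2*n+k) + ρ₂ ^ (2*n+k)) := by
          apply mul_le_mul (mul_le_mul_of_nonneg_left hA (abs_nonneg _)) hB htp
          positivity
      _ = (((2*n+k).natAbs : ℝ) + 1) * |c n| * (ρ₁ ^ (2*n+k) + ρ₂ ^ (2*n+k)) := by ring
  refine hasDerivAt_of_tendstoUniformlyOn (f := fun (N : Finset ℤ) (t : ℝ) =>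
      ∑ n ∈ N, c n * t ^ (2*n+k)) hso (tendstoUniformlyOn_tsum hu hbound) ?_ ?_ hmem
  · apply Filter.Eventually.of_forall
    intro N t ht
    have ht0 : t ≠ 0 := by have := (hts' t ht).1; intro hh; rw [hh] at this; linarith
    apply HasDerivAt.fun_sum
    intro n _
    have := (hasDerivAt_zpow (2*n+k) t (Or.inl ht0)).const_mul (c n)
    simpa [mul_assoc] using this
  · intro t ht
    have h1t := (hts' t ht).1
    have h0t : (0:ℝ) < t := by linarith
    have : Summable (fun n : ℤ => c n * t ^ (2*n+k)) := by
      apply Summable.of_norm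
      apply Summable.of_nonneg_of_le (fun n => norm_nonneg _) _ (hs t h1t (hts' t ht).2)
      intro n
      rw [Real.norm_eq_abs, abs_mul, abs_of_pos (zpow_pos h0t _)]
      have h1le : (1:ℝ) ≤ ((2*n+k).natAbs : ℝ) + 1 := by
        have := Nat.cast_nonneg (α := ℝ) ((2*n+k).natAbs); linarith
      calc |c n| * t ^ (2*n+k) = 1 * |c n| * t ^ (2*n+k) := by ring
        _ ≤ (((2*n+k).natAbs : ℝ) + 1) * |c n| * t ^ (2*n+k) :=
            mul_le_mul_of_nonneg_right
              (mul_le_mul_of_nonneg_right h1le (abs_nonneg _)) (zpow_pos h0t _).le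
    exact this.hasSum

theorem stmt15 (R : ℝ) (hR : 1 < R) (h : ℂ → ℂ) (a : ℤ → ℂ)
    (hol : DifferentiableOn ℂ h {z : ℂ | 1 < ‖z‖ ∧ ‖z‖ < R})
    (hsum : ∀ z : ℂ, 1 < ‖z‖ → ‖z‖ < R →
      HasSum (fun n : ℤ => a n * z ^ n) (h z))
    (U : ℝ → ℝ)
    (hU : ∀ ρ : ℝ, 1 < ρ → ρ < R →
      U ρ = ∑' n : ℤ, ‖a n‖ ^ 2 * ρ ^ (2 * n)) :
    ∀ ρ : ℝ, 1 < ρ → ρ < R →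
      (1 / ρ) * deriv (fun s : ℝ => s ^ 3 * deriv (fun t : ℝ => U t / t ^ 2) s) ρ =
          4 * ∑' n : ℤ, (n : ℝ) * ((n : ℝ) - 1) * ‖a n‖ ^ 2 * ρ ^ (2 * n - 2) ∧
        0 ≤ 4 * ∑' n : ℤ, (n : ℝ) * ((n : ℝ) - 1) * ‖a n‖ ^ 2 * ρ ^ (2 * n - 2) := by
  intro ρ hρ1 hρR
  have hρ0 : (0:ℝ) < ρ := by linarith
  set b : ℤ → ℝ := fun n => ‖a n‖ ^ 2 with hbdef
  have hbnn : ∀ n, 0 ≤ b n := fun n => by rw [hbdef]; positivity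
  -- absolute summability on circles
  have habs : ∀ t : ℝ, 1 < t → t < R → Summable (fun n : ℤ => ‖a n‖ * t ^ n) := by
    intro t h1 h2
    have ht0 : (0:ℝ) < t := by linarith
    have hz1 : 1 < ‖(t : ℂ)‖ := by
      rwa [Complex.norm_real, Real.norm_eq_abs, abs_of_pos ht0]
    have hz2 : ‖(t : ℂ)‖ < R := by
      rwa [Complex.norm_real, Real.norm_eq_abs, abs_of_pos ht0]
    have hsummable := (hsum (t : ℂ) hz1 hz2).summable
    have := summable_norm_iff.mpr hsummable
    refine this.congr (fun n => ?_)
    rw [norm_mul, norm_zpow, Complex.norm_real, Real.norm_eq_abs, abs_of_pos ht0]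
  have hmaster : ∀ t : ℝ, 1 < t → t < R →
      Summable (fun n : ℤ => ((n.natAbs : ℝ) + 1) ^ 2 * b n * t ^ (2 * n)) :=
    fun t h1 h2 => masterSummable habs h1 h2
  -- summability hypotheses for the two term-by-term differentiations
  have hs1 : ∀ t : ℝ, 1 < t → t < R →
      Summable (fun n : ℤ => (((2*n+(-2)).natAbs : ℝ) + 1) * |b n| * t ^ (2*n+(-2))) := by
    intro t h1 h2
    have ht0 : (0:ℝ) < t := by linarith
    apply Summable.of_nonneg_of_le (fun n => by positivity) _ ((hmaster t h1 h2).mul_left 3)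
    intro n
    have hA : (((2*n+(-2)).natAbs : ℝ) + 1) ≤ 3 * ((n.natAbs : ℝ) + 1) ^ 2 := by
      rw [Nat.cast_natAbs, Int.cast_abs, Nat.cast_natAbs, Int.cast_abs]
      push_cast
      have h3 : |2*(n:ℝ) + (-2)| ≤ 2 * |(n:ℝ)| + 2 := by
        calc |2*(n:ℝ) + (-2)| ≤ |2*(n:ℝ)| + |(-2:ℝ)| := abs_add_le _ _
          _ = 2 * |(n:ℝ)| + 2 := by rw [abs_mul]; norm_num
      nlinarith [abs_nonneg ((n:ℝ))]
    have hB : t ^ (2*n+(-2)) ≤ t ^ (2*n) := zpow_le_zpow_right₀ h1.le (by omega)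
    calc (((2*n+(-2)).natAbs : ℝ) + 1) * |b n| * t ^ (2*n+(-2))
        ≤ (3 * ((n.natAbs : ℝ) + 1) ^ 2) * b n * t ^ (2*n) := by
          rw [abs_of_nonneg (hbnn n)]
          apply mul_le_mul (mul_le_mul hA le_rfl (hbnn n) (by positivity)) hB
            (zpow_pos ht0 _).le (by positivity)
      _ = 3 * (((n.natAbs : ℝ) + 1) ^ 2 * b n * t ^ (2*n)) := by ring
  set c₂ : ℤ → ℝ := fun n => b n * ((2*n+(-2) : ℤ) : ℝ) with hc₂def
  have hs2 : ∀ t : ℝ, 1 < t → t < R →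
      Summable (fun n : ℤ => (((2*n+0).natAbs : ℝ) + 1) * |c₂ n| * t ^ (2*n+0)) := by
    intro t h1 h2
    have ht0 : (0:ℝ) < t := by linarith
    apply Summable.of_nonneg_of_le (fun n => by positivity) _ ((hmaster t h1 h2).mul_left 9)
    intro n
    have hA : (((2*n+0).natAbs : ℝ) + 1) * |((2*n+(-2) : ℤ) : ℝ)|
        ≤ 9 * ((n.natAbs : ℝ) + 1) ^ 2 := by
      rw [Nat.cast_natAbs, Int.cast_abs, Nat.cast_natAbs, Int.cast_abs]
      push_cast
      have h3 : |2*(n:ℝ) + (-2)| ≤ 2 * |(n:ℝ)| + 2 := by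
        calc |2*(n:ℝ) + (-2)| ≤ |2*(n:ℝ)| + |(-2:ℝ)| := abs_add_le _ _
          _ = 2 * |(n:ℝ)| + 2 := by rw [abs_mul]; norm_num
      have h4 : |2*(n:ℝ) + 0| ≤ 2 * |(n:ℝ)| := by
        rw [add_zero, abs_mul]; norm_num
      have key : (|2*(n:ℝ)+0| + 1) * |2*(n:ℝ)+(-2)| ≤ (2*|(n:ℝ)|+1) * (2*|(n:ℝ)|+2) :=
        mul_le_mul (by linarith) h3 (abs_nonneg _) (by positivity)
      nlinarith [abs_nonneg ((n:ℝ)), key]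
    calc (((2*n+0).natAbs : ℝ) + 1) * |c₂ n| * t ^ (2*n+0)
        = ((((2*n+0).natAbs : ℝ) + 1) * |((2*n+(-2) : ℤ) : ℝ)|) * b n * t ^ (2*n) := by
          rw [hc₂def, abs_mul, abs_of_nonneg (hbnn n), show (2*n+0 : ℤ) = 2*n by ring]
          ring
      _ ≤ (9 * ((n.natAbs : ℝ) + 1) ^ 2) * b n * t ^ (2*n) := by
          apply mul_le_mul (mul_le_mul hA le_rfl (hbnn n) (by positivity)) le_rfl
            (zpow_pos ht0 _).le (by positivity)
      _ = 9 * (((n.natAbs : ℝ) + 1) ^ 2 * b n * t ^ (2*n)) := by ring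
  -- Eq A : U/t² is the shifted series
  have eqA : ∀ t : ℝ, 1 < t → t < R →
      U t / t ^ 2 = ∑' n : ℤ, b n * t ^ (2*n+(-2)) := by
    intro t h1 h2
    have ht0 : (0:ℝ) < t := by linarith
    rw [hU t h1 h2, ← tsum_div_const]
    apply tsum_congr
    intro n
    rw [show (t:ℝ) ^ (2:ℕ) = t ^ ((2:ℕ) : ℤ) from (zpow_natCast t 2).symm,
      mul_div_assoc, ← zpow_sub₀ (ne_of_gt ht0)]
    rw [show (2*n - ((2:ℕ):ℤ) : ℤ) = 2*n + (-2) by push_cast; ring]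
  -- Eq B : derivative of U/t² on the annulus
  have eqB : ∀ t : ℝ, 1 < t → t < R →
      deriv (fun t : ℝ => U t / t ^ 2) t
        = ∑' n : ℤ, b n * ((2*n+(-2) : ℤ) : ℝ) * t ^ (2*n+(-2)-1) := by
    intro t h1 h2
    have hd := termDeriv (R := R) b (-2) hs1 h1 h2
    have heq : (fun t : ℝ => U t / t ^ 2) =ᶠ[nhds t] fun t => ∑' n : ℤ, b n * t ^ (2*n+(-2)) := by
      filter_upwards [Ioo_mem_nhds h1 h2] with x hx
      exact eqA x hx.1 hx.2
    rw [heq.deriv_eq]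
    exact hd.deriv
  -- Eq C : s³·(deriv) is the second series
  have eqC : ∀ s : ℝ, 1 < s → s < R →
      s ^ 3 * deriv (fun t : ℝ => U t / t ^ 2) s = ∑' n : ℤ, c₂ n * s ^ (2*n+0) := by
    intro s h1 h2
    have hs0 : (0:ℝ) < s := by linarith
    rw [eqB s h1 h2, ← tsum_mul_left]
    apply tsum_congr
    intro n
    rw [hc₂def]
    rw [show (s:ℝ) ^ (3:ℕ) = s ^ ((3:ℕ) : ℤ) from (zpow_natCast s 3).symm]
    rw [show (2*n+(-2)-1 : ℤ) = 2*n+(-3) by ring]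
    rw [mul_comm ((s:ℝ) ^ ((3:ℕ):ℤ)), mul_assoc, mul_assoc, ← zpow_add₀ (ne_of_gt hs0)]
    norm_num
    ring_nf
  -- Eq D : second differentiation
  have eqD : deriv (fun s : ℝ => s ^ 3 * deriv (fun t : ℝ => U t / t ^ 2) s) ρ
      = ∑' n : ℤ, c₂ n * ((2*n+0 : ℤ) : ℝ) * ρ ^ (2*n+0-1) := by
    have hd := termDeriv (R := R) c₂ 0 hs2 hρ1 hρR
    have heq : (fun s : ℝ => s ^ 3 * deriv (fun t : ℝ => U t / t ^ 2) s)
        =ᶠ[nhds ρ] fun s => ∑' n : ℤ, c₂ n * s ^ (2*n+0) := by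
      filter_upwards [Ioo_mem_nhds hρ1 hρR] with x hx
      exact eqC x hx.1 hx.2
    rw [heq.deriv_eq]
    exact hd.deriv
  constructor
  · rw [eqD, ← tsum_mul_left, ← tsum_mul_left]
    apply tsum_congr
    intro n
    rw [hc₂def, show (2*n+0-1 : ℤ) = (2*n-2)+1 by ring, zpow_add₀ (ne_of_gt hρ0), zpow_one]
    push_cast
    field_simp
    ring
  · apply mul_nonneg (by norm_num)
    apply tsum_nonneg
    intro n
    have hnn : 0 ≤ (n:ℝ) * ((n:ℝ) - 1) := by
      rcases le_or_gt 1 n with hn | hn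
      · have : (1:ℝ) ≤ (n:ℝ) := by exact_mod_cast hn
        nlinarith
      · have : (n:ℝ) ≤ 0 := by exact_mod_cast (by omega : n ≤ 0)
        nlinarith
    exact mul_nonneg (mul_nonneg hnn (hbnn n)) (zpow_pos hρ0 _).le
end
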